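/- arXiv:2311.17346 — 2 statements merged into one kernel-verified Lean document; each statement's English description precedes it below -/
import Mathlib

section
/- In the lifted TASEP, any move sequence from configuration A (particles at 1,...,N, pointer at site 1) to configuration B (particles at L−N+1,...,L, pointer at site L−1) requires at least N(L−N) + 2N − 3 moves: N(L−N) moves for mass transport (each move displaces at most one particle by one unit), plus N−1 initial pointer-relaying moves out of A and N−2 final pointer-relaying moves into B, all disjoint. -/
namespace Paper

/-- There is a path of exactly `n` moves of `step` from `x` to `y`. -/
def Reaches {C : Type*} (step : C → C → Prop) (x y : C) (n : ℕ) : Prop :=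
  ∃ f : ℕ → C, f 0 = x ∧ f n = y ∧ ∀ i < n, step (f i) (f (i + 1))

/-- Graph distance: minimal number of moves from `x` to `y`. -/
noncomputable def gdist {C : Type*} (step : C → C → Prop) (x y : C) : ℕ :=
  sInf {n | Reaches step x y n}

/-- Intermediate state of a lifted-TASEP move: the active particle at `c.2`
advances deterministically if unblocked, otherwise the activity passes to the
blocking particle. -/
def Inter {L : ℕ} (c : Finset (ZMod L) × ZMod L) : Finset (ZMod L) × ZMod L :=
  if c.2 + 1 ∈ c.1 then (c.1, c.2 + 1) else (insert (c.2 + 1) (c.1.erase c.2), c.2 + 1)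

/-- `r` is the particle of `s` immediately preceding position `q` (cyclically). -/
def IsPred {L : ℕ} (s : Finset (ZMod L)) (q r : ZMod L) : Prop :=
  ∃ k : ℕ, 0 < k ∧ r = q - (k : ZMod L) ∧ r ∈ s ∧
    ∀ j : ℕ, 0 < j → j < k → q - (j : ZMod L) ∉ s

/-- A lifted-TASEP move: deterministic advance, then either a forward move
(no further action) or a pullback move (activity to the preceding particle). -/
def LStep {L : ℕ} (c d : Finset (ZMod L) × ZMod L) : Prop :=
  c.2 ∈ c.1 ∧ (d = Inter c ∨ (d.1 = (Inter c).1 ∧ IsPred (Inter c).1 (Inter c).2 d.2))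

section Aux

variable {N L : ℕ}

/-- The particle set of configuration `A`. -/
def sA (N L : ℕ) : Finset (ZMod L) := (Finset.range N).image fun j => ((j + 1 : ℕ) : ZMod L)

/-- The particle set of configuration `B`. -/
def sB (N L : ℕ) : Finset (ZMod L) := (Finset.range N).image fun j => ((L - N + 1 + j : ℕ) : ZMod L)

lemma mem_sA (hN : 1 < N) (hNL : N < L) {x : ZMod L} :
    x ∈ sA N L ↔ 1 ≤ x.val ∧ x.val ≤ N := by
  haveI : NeZero L := ⟨by omega⟩
  constructor
  · intro hx
    obtain ⟨j, hj, rfl⟩ := Finset.mem_image.1 hx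
    rw [Finset.mem_range] at hj
    rw [ZMod.val_natCast_of_lt (by omega)]
    omega
  · rintro ⟨h1, h2⟩
    refine Finset.mem_image.2 ⟨x.val - 1, Finset.mem_range.2 (by omega), ?_⟩
    have h3 : x.val - 1 + 1 = x.val := by omega
    rw [h3, ZMod.natCast_rightInverse x]

lemma mem_sB (hN : 1 < N) (hNL : N < L) {x : ZMod L} :
    x ∈ sB N L ↔ x.val = 0 ∨ L - N + 1 ≤ x.val := by
  haveI : NeZero L := ⟨by omega⟩
  constructor
  · intro hx
    obtain ⟨j, hj, rfl⟩ := Finset.mem_image.1 hx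
    rw [Finset.mem_range] at hj
    by_cases hj' : L - N + 1 + j = L
    · left; rw [hj', ZMod.natCast_self, ZMod.val_zero]
    · right; rw [ZMod.val_natCast_of_lt (by omega)]; omega
  · rintro (h | h)
    · refine Finset.mem_image.2 ⟨N - 1, Finset.mem_range.2 (by omega), ?_⟩
      have h1 : L - N + 1 + (N - 1) = L := by omega
      rw [h1, ZMod.natCast_self]
      have h2 := ZMod.natCast_rightInverse x
      rw [← h2, h, Nat.cast_zero]
    · refine Finset.mem_image.2 ⟨x.val - (L - N + 1), Finset.mem_range.2 ?_, ?_⟩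
      · have := ZMod.val_lt x; omega
      · have h1 : L - N + 1 + (x.val - (L - N + 1)) = x.val := by omega
        rw [h1, ZMod.natCast_rightInverse x]

/-- Mass-transport potential. -/
def phi (L : ℕ) (s : Finset (ZMod L)) : ℤ := ∑ x ∈ s, ((x - 1).val : ℤ)

lemma phi_sA (hN : 1 < N) (hNL : N < L) :
    phi L (sA N L) = ∑ j ∈ Finset.range N, (j : ℤ) := by
  haveI : NeZero L := ⟨by omega⟩
  rw [phi, sA, Finset.sum_image ?inj]
  case inj =>
    intro a ha b hb hab
    rw [Finset.mem_coe, Finset.mem_range] at ha hb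
    have h := congrArg ZMod.val hab
    rw [ZMod.val_natCast_of_lt (by omega), ZMod.val_natCast_of_lt (by omega)] at h
    omega
  refine Finset.sum_congr rfl fun j hj => ?_
  rw [Finset.mem_range] at hj
  have h1 : ((j + 1 : ℕ) : ZMod L) - 1 = ((j : ℕ) : ZMod L) := by push_cast; ring
  rw [h1, ZMod.val_natCast_of_lt (by omega)]

lemma phi_sB (hN : 1 < N) (hNL : N < L) :
    phi L (sB N L) = ∑ j ∈ Finset.range N, ((L - N + j : ℕ) : ℤ) := by
  haveI : NeZero L := ⟨by omega⟩
  rw [phi, sB, Finset.sum_image ?inj]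
  case inj =>
    intro a ha b hb hab
    rw [Finset.mem_coe, Finset.mem_range] at ha hb
    beta_reduce at hab
    by_cases h1 : L - N + 1 + a = L <;> by_cases h2 : L - N + 1 + b = L
    · omega
    · exfalso
      rw [h1, ZMod.natCast_self] at hab
      have h := congrArg ZMod.val hab
      rw [ZMod.val_zero, ZMod.val_natCast_of_lt (by omega)] at h
      omega
    · exfalso
      rw [h2, ZMod.natCast_self] at hab
      have h := congrArg ZMod.val hab
      rw [ZMod.val_zero, ZMod.val_natCast_of_lt (by omega)] at h
      omega
    · have h := congrArg ZMod.val hab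
      rw [ZMod.val_natCast_of_lt (by omega), ZMod.val_natCast_of_lt (by omega)] at h
      omega
  refine Finset.sum_congr rfl fun j hj => ?_
  rw [Finset.mem_range] at hj
  have h1 : ((L - N + 1 + j : ℕ) : ZMod L) - 1 = ((L - N + j : ℕ) : ZMod L) := by
    push_cast; ring
  rw [h1, ZMod.val_natCast_of_lt (by omega)]

lemma phi_diff (hN : 1 < N) (hNL : N < L) :
    phi L (sB N L) - phi L (sA N L) = (N : ℤ) * ((L - N : ℕ) : ℤ) := by
  rw [phi_sA hN hNL, phi_sB hN hNL, ← Finset.sum_sub_distrib]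
  have h : ∀ j ∈ Finset.range N, ((L - N + j : ℕ) : ℤ) - (j : ℤ) = ((L - N : ℕ) : ℤ) := by
    intro j _; push_cast; ring
  rw [Finset.sum_congr rfl h, Finset.sum_const, Finset.card_range, nsmul_eq_mul]

lemma lstep_fst {c d : Finset (ZMod L) × ZMod L} (h : LStep c d) : d.1 = (Inter c).1 := by
  rcases h.2 with h1 | h1
  · rw [h1]
  · exact h1.1

lemma lstep_changed' {c d : Finset (ZMod L) × ZMod L} (h : LStep c d) (hne : d.1 ≠ c.1) :
    c.2 + 1 ∉ c.1 ∧ d.1 = insert (c.2 + 1) (c.1.erase c.2) := by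
  have h1 := lstep_fst h
  by_cases hm : c.2 + 1 ∈ c.1
  · exact absurd (by rw [h1, Inter, if_pos hm]) hne
  · exact ⟨hm, by rw [h1, Inter, if_neg hm]⟩

lemma phi_le_of_lstep (hL : 1 < L) {c d : Finset (ZMod L) × ZMod L} (h : LStep c d)
    (hne : d.1 ≠ c.1) : phi L d.1 ≤ phi L c.1 + 1 := by
  haveI : NeZero L := ⟨by omega⟩
  haveI : Fact (1 < L) := ⟨hL⟩
  obtain ⟨hm, hd⟩ := lstep_changed' h hne
  have hp : c.2 ∈ c.1 := h.1
  have hne2 : c.2 + 1 ∉ c.1.erase c.2 := fun hx => hm (Finset.mem_of_mem_erase hx)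
  rw [hd, phi, Finset.sum_insert hne2]
  have herase : (∑ x ∈ c.1.erase c.2, ((x - 1).val : ℤ)) = phi L c.1 - ((c.2 - 1).val : ℤ) := by
    rw [phi, ← Finset.sum_erase_add _ _ hp]; ring
  rw [herase]
  have hval : (c.2 + 1 - 1 : ZMod L) = c.2 := by ring
  rw [hval]
  have h1 := ZMod.val_add (c.2 - 1) 1
  rw [sub_add_cancel, ZMod.val_one] at h1
  have h2 : c.2.val ≤ (c.2 - 1).val + 1 := by rw [h1]; exact Nat.mod_le _ _
  have h3 : (c.2.val : ℤ) ≤ ((c.2 - 1).val : ℤ) + 1 := by exact_mod_cast h2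
  linarith

lemma phi_telescope (hL : 1 < L) {n : ℕ} (f : ℕ → Finset (ZMod L) × ZMod L)
    (hstep : ∀ i < n, LStep (f i) (f (i + 1))) :
    ∀ m ≤ n, phi L (f m).1 ≤ phi L (f 0).1 +
      ((Finset.range m).filter (fun i => (f (i + 1)).1 ≠ (f i).1)).card := by
  intro m
  induction m with
  | zero => intro _; simp
  | succ m ih =>
    intro hm
    have ih' := ih (by omega)
    have hcard : ((Finset.range (m + 1)).filter (fun i => (f (i + 1)).1 ≠ (f i).1)).card =
        ((Finset.range m).filter (fun i => (f (i + 1)).1 ≠ (f i).1)).card +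
          (if (f (m + 1)).1 ≠ (f m).1 then 1 else 0) := by
      rw [Finset.range_add_one, Finset.filter_insert]
      split
      · rw [Finset.card_insert_of_notMem (by simp)]
      · simp
    rw [hcard]
    by_cases hne : (f (m + 1)).1 = (f m).1
    · rw [if_neg (by simpa using hne), Nat.add_zero, hne]
      exact ih'
    · rw [if_pos hne]
      have h1 := phi_le_of_lstep hL (hstep m (by omega)) hne
      push_cast
      push_cast at ih'
      linarith

lemma isPred_eq_of_mem {s : Finset (ZMod L)} {q r : ZMod L} (hq : q - 1 ∈ s)
    (h : IsPred s q r) : r = q - 1 := by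
  obtain ⟨k, hk0, hr, hrs, hmin⟩ := h
  by_cases hk1 : k = 1
  · rw [hr, hk1, Nat.cast_one]
  · have h1 := hmin 1 one_pos (by omega)
    rw [Nat.cast_one] at h1
    exact absurd hq h1

lemma val_succ (hL : 1 < L) (a : ZMod L) :
    (a + 1).val = a.val + 1 ∨ (a.val = L - 1 ∧ (a + 1).val = 0) := by
  haveI : NeZero L := ⟨by omega⟩
  haveI : Fact (1 < L) := ⟨hL⟩
  rw [ZMod.val_add, ZMod.val_one]
  rcases Nat.lt_or_ge (a.val + 1) L with h | h
  · left; rw [Nat.mod_eq_of_lt h]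
  · right
    have h2 : a.val + 1 = L := by have := ZMod.val_lt a; omega
    exact ⟨by omega, by rw [h2, Nat.mod_self]⟩

lemma isPred_sB {r : ZMod L} (hN : 1 < N) (hNL : N < L)
    (h : IsPred (sB N L) ((L - N + 1 : ℕ) : ZMod L) r) : r.val = 0 := by
  haveI : NeZero L := ⟨by omega⟩
  obtain ⟨k, hk0, hr, hrs, hmin⟩ := h
  by_cases hk1 : k = L - N + 1
  · subst hk1
    rw [hr, ← Nat.cast_sub (le_refl _), Nat.sub_self, Nat.cast_zero, ZMod.val_zero]
  · rcases Nat.lt_or_ge k (L - N + 1) with hk | hk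
    · exfalso
      rw [hr] at hrs
      rw [← Nat.cast_sub (by omega), mem_sB hN hNL,
        ZMod.val_natCast_of_lt (by omega)] at hrs
      omega
    · exfalso
      have h0 := hmin (L - N + 1) (by omega) (by omega)
      rw [← Nat.cast_sub (le_refl _), Nat.sub_self, Nat.cast_zero] at h0
      exact h0 (by rw [mem_sB hN hNL, ZMod.val_zero]; left; rfl)

lemma head_claim (hN : 1 < N) (hNL : N < L) {n : ℕ} {f : ℕ → Finset (ZMod L) × ZMod L}
    (hstep : ∀ i < n, LStep (f i) (f (i + 1)))
    (h0 : f 0 = (sA N L, ((1 : ℕ) : ZMod L))) :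
    ∀ i, i ≤ N - 1 → i ≤ n →
      (f i).1 = sA N L ∧ 1 ≤ (f i).2.val ∧ (f i).2.val ≤ i + 1 := by
  haveI : NeZero L := ⟨by omega⟩
  haveI : Fact (1 < L) := ⟨by omega⟩
  intro i
  induction i with
  | zero =>
    intro _ _
    rw [h0]
    refine ⟨rfl, ?_, ?_⟩ <;> simp [ZMod.val_one]
  | succ i ih =>
    intro hi1 hi2
    obtain ⟨hs, hv1, hv2⟩ := ih (by omega) (by omega)
    have hstepi := hstep i (by omega)
    have hpv : ((f i).2 + 1).val = (f i).2.val + 1 := by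
      rw [ZMod.val_add, ZMod.val_one, Nat.mod_eq_of_lt (by omega)]
    have hmem : (f i).2 + 1 ∈ (f i).1 := by
      rw [hs, mem_sA hN hNL, hpv]; omega
    have hInter : Inter (f i) = ((f i).1, (f i).2 + 1) := by rw [Inter, if_pos hmem]
    rcases hstepi.2 with hd | ⟨hd1, hd2⟩
    · rw [hd, hInter]
      exact ⟨hs, by rw [hpv]; omega, by rw [hpv]; omega⟩
    · rw [hInter] at hd1 hd2
      have hq : (f i).2 + 1 - 1 ∈ (f i).1 := by
        rw [add_sub_cancel_right]; exact hstepi.1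
      have heq := isPred_eq_of_mem hq hd2
      rw [add_sub_cancel_right] at heq
      exact ⟨hd1.trans hs, by rw [heq]; omega, by rw [heq]; omega⟩

lemma tail_claim (hN : 1 < N) (hNL : N < L) {n : ℕ} {f : ℕ → Finset (ZMod L) × ZMod L}
    (hstep : ∀ i < n, LStep (f i) (f (i + 1)))
    (hn : f n = (sB N L, ((L - 1 : ℕ) : ZMod L))) (hNn : N ≤ n) :
    ∀ j, j ≤ N - 2 → (f (n - j)).1 = sB N L ∧ L - 1 - j ≤ (f (n - j)).2.val := by
  haveI : NeZero L := ⟨by omega⟩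
  haveI : Fact (1 < L) := ⟨by omega⟩
  intro j
  induction j with
  | zero =>
    intro _
    rw [Nat.sub_zero, hn]
    exact ⟨rfl, by rw [ZMod.val_natCast_of_lt (by omega)]; omega⟩
  | succ j ih =>
    intro hj
    obtain ⟨hs, hv⟩ := ih (by omega)
    have hi : n - (j + 1) < n := by omega
    have hi1 : n - (j + 1) + 1 = n - j := by omega
    have hstepi := hstep (n - (j + 1)) hi
    rw [hi1] at hstepi
    set c := f (n - (j + 1)) with hc
    have hqv : L - N + 2 ≤ (f (n - j)).2.val := by omega
    by_cases hm : c.2 + 1 ∈ c.1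
    · have hInter : Inter c = (c.1, c.2 + 1) := by rw [Inter, if_pos hm]
      rcases hstepi.2 with hd | ⟨hd1, hd2⟩
      · have hs1 : c.1 = sB N L := by rw [← hs, hd, hInter]
        have hq1 : (f (n - j)).2 = c.2 + 1 := by rw [hd, hInter]
        rcases val_succ (by omega) c.2 with hvs | hvs
        · refine ⟨hs1, ?_⟩
          rw [hq1, hvs] at hqv hv
          omega
        · exfalso
          rw [hq1, hvs.2] at hqv
          omega
      · rw [hInter] at hd1 hd2
        have hq : c.2 + 1 - 1 ∈ c.1 := by rw [add_sub_cancel_right]; exact hstepi.1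
        have heq := isPred_eq_of_mem hq hd2
        rw [add_sub_cancel_right] at heq
        refine ⟨hd1.symm ▸ hs, ?_⟩
        rw [← heq]
        omega
    · have hInter : Inter c = (insert (c.2 + 1) (c.1.erase c.2), c.2 + 1) := by
        rw [Inter, if_neg hm]
      have hs1 : insert (c.2 + 1) (c.1.erase c.2) = sB N L := by
        rw [← hs]
        rcases hstepi.2 with hd | ⟨hd1, _⟩
        · rw [hd, hInter]
        · rw [hd1, hInter]
      have hp1 : c.2 ∉ sB N L := by
        rw [← hs1, Finset.mem_insert]
        rintro (h | h)
        · exact one_ne_zero ((left_eq_add.1 h))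
        · exact (Finset.mem_erase.1 h).1 rfl
      have hp2 : c.2 + 1 ∈ sB N L := hs1 ▸ Finset.mem_insert_self _ _
      rw [mem_sB hN hNL] at hp1 hp2
      push_neg at hp1
      rcases val_succ (by omega) c.2 with hvs | hvs
      · have hcv : c.2.val = L - N := by omega
        have hc2 : c.2 + 1 = ((L - N + 1 : ℕ) : ZMod L) := by
          have h1 : ((c.2.val : ℕ) : ZMod L) = c.2 := ZMod.natCast_rightInverse c.2
          rw [← h1, hcv]
          push_cast
          ring
        exfalso
        rcases hstepi.2 with hd | ⟨hd1, hd2⟩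
        · have hq1 : (f (n - j)).2 = c.2 + 1 := by rw [hd, hInter]
          rw [hq1, hvs, hcv] at hqv
          omega
        · rw [hInter] at hd2
          simp only at hd2
          rw [hs1, hc2] at hd2
          have := isPred_sB hN hNL hd2
          omega
      · exfalso
        omega
end Aux

/-- any lifted-TASEP move sequence from `A` (particles at
`1,…,N`, pointer at site `1`) to `B` (particles at `L-N+1,…,L`, pointer at
site `L-1`) has length at least `N(L-N) + 2N - 3`. -/
theorem lifted_dist_A_B_lower_bound (N L : ℕ) (hN : 1 < N) (hNL : N < L) :
    ∀ n : ℕ, Reaches (LStep (L := L))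
        (((Finset.range N).image fun j => ((j + 1 : ℕ) : ZMod L)),
          ((1 : ℕ) : ZMod L))
        (((Finset.range N).image fun j => ((L - N + 1 + j : ℕ) : ZMod L)),
          ((L - 1 : ℕ) : ZMod L)) n →
      N * (L - N) + 2 * N - 3 ≤ n := by
  haveI : NeZero L := ⟨by omega⟩
  haveI : Fact (1 < L) := ⟨by omega⟩
  rintro n ⟨f, h0, hn, hstep⟩
  classical
  have h0' : f 0 = (sA N L, ((1 : ℕ) : ZMod L)) := h0
  have hn' : f n = (sB N L, ((L - 1 : ℕ) : ZMod L)) := hn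
  -- lower bound on the number of set-changing steps
  have hScard : N * (L - N) ≤
      ((Finset.range n).filter (fun i => (f (i + 1)).1 ≠ (f i).1)).card := by
    have h1 := phi_telescope (by omega) f hstep n le_rfl
    rw [h0', hn'] at h1
    simp only at h1
    have h2 := phi_diff (N := N) (L := L) hN hNL
    have h3 : ((N * (L - N) : ℕ) : ℤ) ≤
        (((Finset.range n).filter (fun i => (f (i + 1)).1 ≠ (f i).1)).card : ℤ) := by
      push_cast
      push_cast at h2
      linarith
    exact_mod_cast h3
  have hhead := head_claim hN hNL hstep h0'
  -- n ≥ N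
  have hnN : N ≤ n := by
    by_contra hcon
    push_neg at hcon
    obtain ⟨hsa, -, -⟩ := hhead n (by omega) le_rfl
    have h1 : ((1 : ℕ) : ZMod L) ∈ sA N L := by
      rw [mem_sA hN hNL, ZMod.val_natCast_of_lt (by omega)]
      omega
    have h2 : (f n).1 = sB N L := by rw [hn']
    rw [hsa] at h2
    rw [h2, mem_sB hN hNL, ZMod.val_natCast_of_lt (by omega)] at h1
    omega
  have htail := tail_claim hN hNL hstep hn' hnN
  -- non-changing steps contain the head and the tail
  have hT : Finset.range (N - 1) ∪ Finset.Ico (n - (N - 2)) n ⊆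
      (Finset.range n).filter (fun i => ¬ (f (i + 1)).1 ≠ (f i).1) := by
    intro i hi
    rw [Finset.mem_union] at hi
    rw [Finset.mem_filter, Finset.mem_range, not_not]
    rcases hi with hi | hi
    · rw [Finset.mem_range] at hi
      obtain ⟨ha1, -, -⟩ := hhead i (by omega) (by omega)
      obtain ⟨ha2, -, -⟩ := hhead (i + 1) (by omega) (by omega)
      exact ⟨by omega, by rw [ha1, ha2]⟩
    · rw [Finset.mem_Ico] at hi
      have hj1 : n - (n - i) = i := by omega
      have hj2 : n - (n - (i + 1)) = i + 1 := by omega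
      obtain ⟨hb1, -⟩ := htail (n - i) (by omega)
      obtain ⟨hb2, -⟩ := htail (n - (i + 1)) (by omega)
      rw [hj1] at hb1
      rw [hj2] at hb2
      exact ⟨hi.2, by rw [hb1, hb2]⟩
  have hsplit := Finset.card_filter_add_card_filter_not
    (s := Finset.range n) (p := fun i => (f (i + 1)).1 ≠ (f i).1)
  rw [Finset.card_range] at hsplit
  have hM1 : N ≤ N * (L - N) := Nat.le_mul_of_pos_right N (by omega)
  -- first a weak bound to establish disjointness
  have hT1 : N - 1 ≤
      ((Finset.range n).filter (fun i => ¬ (f (i + 1)).1 ≠ (f i).1)).card := by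
    calc N - 1 = (Finset.range (N - 1)).card := (Finset.card_range _).symm
    _ ≤ _ := Finset.card_le_card
        ((Finset.subset_union_left).trans hT)
  have hn2 : 2 * N - 1 ≤ n := by omega
  have hdisj : Disjoint (Finset.range (N - 1)) (Finset.Ico (n - (N - 2)) n) := by
    rw [Finset.disjoint_left]
    intro a ha hb
    rw [Finset.mem_range] at ha
    rw [Finset.mem_Ico] at hb
    omega
  have hunion : (Finset.range (N - 1) ∪ Finset.Ico (n - (N - 2)) n).card
      = (N - 1) + (N - 2) := by
    rw [Finset.card_union_of_disjoint hdisj, Finset.card_range, Nat.card_Ico]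
    omega
  have hfinal : (N - 1) + (N - 2) ≤
      ((Finset.range n).filter (fun i => ¬ (f (i + 1)).1 ≠ (f i).1)).card := by
    rw [← hunion]
    exact Finset.card_le_card hT
  omega

end Paper
end

section
/- The diameter of the lifted TASEP with N particles on L > N sites satisfies d ≤ 2N(L−N) + N² + C·L = N(2L−N) + O(L), for a constant C independent of N and L. -/
namespace Paper

section Prelim

variable {C : Type*} {step : C → C → Prop}

lemma reaches_refl (x : C) : Reaches step x x 0 :=
  ⟨fun _ => x, rfl, rfl, fun i hi => absurd hi (by omega)⟩

lemma reaches_single {x y : C} (h : step x y) : Reaches step x y 1 := by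
  refine ⟨fun i => if i = 0 then x else y, by simp, by simp, ?_⟩
  intro i hi
  have : i = 0 := by omega
  subst this
  simpa using h

lemma reaches_trans {x y z : C} {m n : ℕ} (h1 : Reaches step x y m)
    (h2 : Reaches step y z n) : Reaches step x z (m + n) := by
  obtain ⟨f, hf0, hfm, hfs⟩ := h1
  obtain ⟨g, hg0, hgn, hgs⟩ := h2
  refine ⟨fun i => if i < m then f i else g (i - m), ?_, ?_, ?_⟩
  · by_cases h : 0 < m
    · simpa [h] using hf0
    · have hm : m = 0 := by omega
      subst hm
      simp only [lt_irrefl, if_neg (lt_irrefl 0)]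
      simpa [hg0, ← hf0] using hfm.symm
  · have : ¬ (m + n < m) := by omega
    simp only [this, if_false]
    simpa using hgn
  · intro i hi
    by_cases h1' : i + 1 < m
    · have h2' : i < m := by omega
      simp only [h1', h2', if_true]
      exact hfs i h2'
    · by_cases h2' : i < m
      · have he : i + 1 = m := by omega
        simp only [h1', h2', if_true, if_false]
        have : g (i + 1 - m) = f (i + 1) := by
          rw [he]; simp [hg0, ← hfm]
        rw [this]
        exact hfs i h2'
      · have h3 : ¬ (i + 1 < m) := by omega
        simp only [h2', h3, if_false]
        have : i + 1 - m = (i - m) + 1 := by omega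
        rw [this]
        exact hgs (i - m) (by omega)

end Prelim

section Steps

variable {L : ℕ}

lemma stepT {s : Finset (ZMod L)} {p : ZMod L} (hp : p ∈ s) (hp1 : p + 1 ∈ s) :
    LStep (s, p) (s, p + 1) := by
  refine ⟨hp, Or.inl ?_⟩
  simp [Inter, hp1]

lemma stepMf {s : Finset (ZMod L)} {p : ZMod L} (hp : p ∈ s) (hp1 : p + 1 ∉ s) :
    LStep (s, p) (insert (p + 1) (s.erase p), p + 1) := by
  refine ⟨hp, Or.inl ?_⟩
  simp [Inter, hp1]

lemma stepMpb {s : Finset (ZMod L)} {p r : ZMod L} {k : ℕ} (hp : p ∈ s) (hp1 : p + 1 ∉ s)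
    (hk : 0 < k) (hr : r = (p + 1) - (k : ZMod L))
    (hrs : r ∈ insert (p + 1) (s.erase p))
    (hmid : ∀ j : ℕ, 0 < j → j < k → (p + 1) - (j : ZMod L) ∉ insert (p + 1) (s.erase p)) :
    LStep (s, p) (insert (p + 1) (s.erase p), r) := by
  refine ⟨hp, Or.inr ⟨?_, ?_⟩⟩
  · simp [Inter, hp1]
  · simp only [Inter, hp1, if_neg hp1]
    exact ⟨k, hk, hr, hrs, hmid⟩

end Steps


section Marches

variable {L : ℕ} [NeZero L]

lemma castInj {a b : ℕ} (ha : a < L) (hb : b < L) (h : (a : ZMod L) = b) : a = b := by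
  have := congrArg ZMod.val h
  rwa [ZMod.val_cast_of_lt ha, ZMod.val_cast_of_lt hb] at this

lemma cast_val_eq (x : ZMod L) : ((x.val : ℕ) : ZMod L) = x := ZMod.natCast_rightInverse x

lemma val_sub_nat {x : ZMod L} {k : ℕ} (hk : k ≤ x.val) : (x - (k : ZMod L)).val = x.val - k := by
  have h1 : x - (k : ZMod L) = ((x.val - k : ℕ) : ZMod L) := by
    rw [Nat.cast_sub hk, cast_val_eq]
  rw [h1, ZMod.val_cast_of_lt]
  have := ZMod.val_lt x
  omega

lemma add_cast_succ (p : ZMod L) (i : ℕ) : p + (i : ZMod L) + 1 = p + ((i + 1 : ℕ) : ZMod L) := by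
  push_cast; ring

lemma twalk {s : Finset (ZMod L)} {p : ZMod L} (k : ℕ)
    (h : ∀ i ≤ k, p + (i : ZMod L) ∈ s) :
    Reaches LStep (s, p) (s, p + (k : ZMod L)) k := by
  induction k with
  | zero => simpa using reaches_refl (step := LStep) (s, p)
  | succ k ih =>
    have h1 := ih (fun i hi => h i (by omega))
    have h2 : LStep (s, p + (k : ZMod L)) (s, p + ((k+1 : ℕ) : ZMod L)) := by
      rw [← add_cast_succ]
      exact stepT (h k (by omega)) (by rw [add_cast_succ]; exact h (k+1) le_rfl)
    exact reaches_trans h1 (reaches_single h2)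

lemma march {s : Finset (ZMod L)} {p : ZMod L} (d : ℕ) (hdL : d < L) (hp : p ∈ s)
    (hpath : ∀ i, 0 < i → i ≤ d → p + (i : ZMod L) ∉ s) :
    Reaches LStep (s, p) (insert (p + (d : ZMod L)) (s.erase p), p + (d : ZMod L)) d := by
  induction d with
  | zero =>
    have : insert (p + ((0:ℕ) : ZMod L)) (s.erase p) = s := by
      simp [Finset.insert_erase hp]
    rw [this]
    simpa using reaches_refl (step := LStep) (s, p)
  | succ d ih =>
    have h1 := ih (by omega) (fun i h1 h2 => hpath i h1 (by omega))
    have hdm : p + (d : ZMod L) ∉ s.erase p := by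
      rcases Nat.eq_zero_or_pos d with h | h
      · subst h; simp
      · exact fun hc => hpath d h (by omega) (Finset.mem_of_mem_erase hc)
    have hne : p + ((d+1 : ℕ) : ZMod L) ≠ p + (d : ZMod L) := by
      intro hc
      have : ((d+1 : ℕ) : ZMod L) = (d : ZMod L) := by
        have := add_left_cancel hc; exact this
      exact absurd (castInj hdL (by omega) this) (by omega)
    have hnm : p + (d : ZMod L) + 1 ∉ insert (p + (d : ZMod L)) (s.erase p) := by
      rw [add_cast_succ]
      simp only [Finset.mem_insert]
      push_neg
      refine ⟨hne, ?_⟩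
      exact fun hc => hpath (d+1) (by omega) le_rfl (Finset.mem_of_mem_erase hc)
    have h2 := stepMf (s := insert (p + (d : ZMod L)) (s.erase p)) (p := p + (d : ZMod L))
      (Finset.mem_insert_self _ _) hnm
    rw [Finset.erase_insert hdm, add_cast_succ] at h2
    exact reaches_trans h1 (reaches_single h2)

lemma march_mpb {s : Finset (ZMod L)} {p r : ZMod L} (d k : ℕ) (hd : 0 < d) (hdL : d < L)
    (hp : p ∈ s)
    (hpath : ∀ i, 0 < i → i ≤ d → p + (i : ZMod L) ∉ s)
    (hk : 0 < k) (hr : r = (p + (d : ZMod L)) - (k : ZMod L))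
    (hrs : r ∈ insert (p + (d : ZMod L)) (s.erase p))
    (hmid : ∀ j : ℕ, 0 < j → j < k →
      (p + (d : ZMod L)) - (j : ZMod L) ∉ insert (p + (d : ZMod L)) (s.erase p)) :
    Reaches LStep (s, p) (insert (p + (d : ZMod L)) (s.erase p), r) d := by
  have h1 := march (s := s) (p := p) (d - 1) (by omega) hp
    (fun i h1 h2 => hpath i h1 (by omega))
  have hdm : p + ((d-1 : ℕ) : ZMod L) ∉ s.erase p := by
    rcases Nat.eq_zero_or_pos (d-1) with h | h
    · rw [h]; simp
    · exact fun hc => hpath (d-1) h (by omega) (Finset.mem_of_mem_erase hc)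
  have hcast : p + ((d-1 : ℕ) : ZMod L) + 1 = p + (d : ZMod L) := by
    rw [add_cast_succ]
    congr 1
    congr 1
    omega
  have hne : p + (d : ZMod L) ≠ p + ((d-1 : ℕ) : ZMod L) := by
    intro hc
    have : (d : ZMod L) = ((d-1 : ℕ) : ZMod L) := add_left_cancel hc
    have := castInj hdL (by omega) this
    omega
  have hnm : p + ((d-1:ℕ) : ZMod L) + 1 ∉ insert (p + ((d-1:ℕ) : ZMod L)) (s.erase p) := by
    rw [hcast]
    simp only [Finset.mem_insert]
    push_neg
    exact ⟨hne, fun hc => hpath d hd le_rfl (Finset.mem_of_mem_erase hc)⟩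
  have h2 := stepMpb (s := insert (p + ((d-1:ℕ) : ZMod L)) (s.erase p))
    (p := p + ((d-1:ℕ) : ZMod L)) (r := r) (k := k)
    (Finset.mem_insert_self _ _) hnm hk
    (by rw [hcast]; exact hr)
    (by rw [Finset.erase_insert hdm, hcast]; exact hrs)
    (by rw [Finset.erase_insert hdm, hcast]; exact hmid)
  rw [Finset.erase_insert hdm, hcast] at h2
  have := reaches_trans h1 (reaches_single h2)
  simpa [Nat.sub_add_cancel hd] using this

end Marches

section Ofs

variable {L : ℕ} [NeZero L]

/-- The set of positions at offsets `A` ahead of base `ρ`. -/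
def ofs (ρ : ZMod L) (A : Finset ℕ) : Finset (ZMod L) := A.image (fun a : ℕ => ρ + (a : ZMod L))

lemma mem_ofs {ρ z : ZMod L} {A : Finset ℕ} : z ∈ ofs ρ A ↔ ∃ a ∈ A, ρ + (a : ZMod L) = z :=
  Finset.mem_image

lemma mem_ofs' {ρ : ZMod L} {A : Finset ℕ} (hA : ∀ a ∈ A, a < L) {b : ℕ} (hb : b < L) :
    ρ + (b : ZMod L) ∈ ofs ρ A ↔ b ∈ A := by
  constructor
  · intro h
    obtain ⟨a, ha, heq⟩ := mem_ofs.1 h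
    have : (a : ZMod L) = (b : ZMod L) := by
      have := add_left_cancel heq; exact this
    rwa [← castInj (hA a ha) hb this]
  · intro h
    exact mem_ofs.2 ⟨b, h, rfl⟩

lemma ofs_insert (ρ : ZMod L) (A : Finset ℕ) (b : ℕ) :
    insert (ρ + (b : ZMod L)) (ofs ρ A) = ofs ρ (insert b A) :=
  (Finset.image_insert _ _ _).symm

lemma ofs_erase {ρ : ZMod L} {A : Finset ℕ} (hA : ∀ a ∈ A, a < L) {b : ℕ} (hb : b < L) :
    (ofs ρ A).erase (ρ + (b : ZMod L)) = ofs ρ (A.erase b) := by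
  ext z
  simp only [Finset.mem_erase, mem_ofs]
  constructor
  · rintro ⟨hne, a, ha, rfl⟩
    exact ⟨a, ⟨fun hc => hne (by rw [hc]), ha⟩, rfl⟩
  · rintro ⟨a, ⟨hne2, ha⟩, rfl⟩
    refine ⟨fun hc => hne2 ?_, a, ha, rfl⟩
    exact castInj (hA a ha) hb (add_left_cancel hc)

lemma ofs_card {ρ : ZMod L} {A : Finset ℕ} (hA : ∀ a ∈ A, a < L) :
    (ofs ρ A).card = A.card := by
  apply Finset.card_image_of_injOn
  intro a ha b hb h
  exact castInj (hA a ha) (hA b hb) (add_left_cancel h)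

end Ofs

section Deal

variable {L : ℕ} [NeZero L]

lemma add_cast_add (p : ZMod L) (a b : ℕ) :
    p + (a : ZMod L) + (b : ZMod L) = p + ((a + b : ℕ) : ZMod L) := by push_cast; ring

lemma Qcard_bound {Q : Finset ℕ} {M : ℕ} (hQb : ∀ u ∈ Q, u < L) (hMQ : ∀ u ∈ Q, M < u) :
    Q.card ≤ L - M - 1 := by
  have hsub : Q ⊆ Finset.Ico (M+1) L := by
    intro u hu
    exact Finset.mem_Ico.2 ⟨by have := hMQ u hu; omega, hQb u hu⟩
  have := Finset.card_le_card hsub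
  simpa [Nat.card_Ico, Nat.sub_sub] using this

/-- Dealing from a packed block, when the target has a packed prefix `[0, m'-1]`
at the block rear: ends with pointer on offset `m' - 1`. -/
lemma deal_prefix (K : ℕ) :
    ∀ j (Q R : Finset ℕ) (ρ : ZMod L),
    R.card = j → (∀ v ∈ R, v < L) → (∀ u ∈ Q, u < L) →
    (∀ v ∈ R, ∀ u ∈ Q, v < u) → j + Q.card = K →
    ∀ m', 1 ≤ m' → (∀ v, v < m' → v ∈ R) → m' ∉ R →
    ∃ n, Reaches LStep (ofs ρ (Finset.range j ∪ Q), ρ + ((j-1 : ℕ) : ZMod L))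
        (ofs ρ (R ∪ Q), ρ + ((m'-1 : ℕ) : ZMod L)) n ∧ n ≤ j * (L - K) := by
  intro j
  induction j with
  | zero =>
    intro Q R ρ hcard _ _ _ _ m' hm' hm1 _
    have h0 : (0 : ℕ) ∈ R := hm1 0 hm'
    rw [Finset.card_eq_zero] at hcard
    simp [hcard] at h0
  | succ jj ih =>
    intro Q R ρ hcard hRb hQb hRQ hK m' hm' hm1 hm2
    simp only [Nat.add_sub_cancel]
    by_cases hR : R = Finset.range (jj+1)
    · -- terminal: already in place
      have hm'le : m' ≤ jj + 1 := by
        by_contra hc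
        have : jj + 1 ∈ R := hm1 (jj+1) (by omega)
        rw [hR, Finset.mem_range] at this
        omega
      have hm'ge : jj + 1 ≤ m' := by
        by_contra hc
        exact hm2 (by rw [hR, Finset.mem_range]; omega)
      have hm'eq : m' = jj + 1 := by omega
      refine ⟨0, ?_, by omega⟩
      rw [hR, hm'eq]
      simpa using reaches_refl (step := LStep) _
    · -- march the top remaining target
      have hRne : R.Nonempty := Finset.card_pos.1 (by omega)
      set M := R.max' hRne with hMdef
      clear_value M
      have hMR : M ∈ R := hMdef ▸ R.max'_mem hRne
      have hML : M < L := hRb M hMR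
      have hMj : jj + 1 ≤ M := by
        by_contra hc
        apply hR
        apply Finset.eq_of_subset_of_card_le
        · intro v hv
          have h' := R.le_max' v hv
          rw [← hMdef] at h'
          rw [Finset.mem_range]; omega
        · rw [hcard, Finset.card_range]
      have hMQ : ∀ u ∈ Q, M < u := fun u hu => hRQ M hMR u hu
      have hd : M - jj ≤ L - K := by
        have := Qcard_bound (L := L) hQb hMQ
        omega
      have hbounds : ∀ a ∈ Finset.range (jj+1) ∪ Q, a < L := by
        intro a ha
        rcases Finset.mem_union.1 ha with h | h
        · rw [Finset.mem_range] at h; omega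
        · exact hQb a h
      have hpath : ∀ i, 0 < i → i ≤ M - jj →
          ρ + ((jj : ℕ) : ZMod L) + (i : ZMod L) ∉ ofs ρ (Finset.range (jj+1) ∪ Q) := by
        intro i hi1 hi2
        rw [add_cast_add, mem_ofs' hbounds (by omega)]
        intro hc
        rcases Finset.mem_union.1 hc with h | h
        · rw [Finset.mem_range] at h; omega
        · have := hMQ _ h; omega
      -- m' ≤ jj+1 and 0 ∈ R so M > m'-1 etc.
      have h0R : (0:ℕ) ∈ R := hm1 0 hm'
      have hm'le : m' ≤ jj + 1 := by
        have hsub : Finset.range m' ⊆ R := fun v hv => hm1 v (Finset.mem_range.1 hv)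
        have := Finset.card_le_card hsub
        rw [hcard, Finset.card_range] at this
        exact this
      have hjj1 : 1 ≤ jj := by
        -- if jj = 0 then R = {M} with M ≥ 1, but 0 ∈ R
        by_contra hc
        have hjj0 : jj = 0 := by omega
        subst hjj0
        rw [Finset.card_eq_one] at hcard
        obtain ⟨a, ha⟩ := hcard
        rw [ha, Finset.mem_singleton] at h0R hMR
        omega
      -- do the march with final pullback to offset jj - 1
      have hmarch := march_mpb (s := ofs ρ (Finset.range (jj+1) ∪ Q))
        (p := ρ + ((jj : ℕ) : ZMod L)) (r := ρ + ((jj - 1 : ℕ) : ZMod L))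
        (M - jj) (M - jj + 1) (by omega) (by omega)
        (by rw [mem_ofs' hbounds (by omega)]
            exact Finset.mem_union_left _ (Finset.mem_range.2 (by omega)))
        hpath (by omega) ?_ ?_ ?_
      rotate_left
      · -- r = landing - k
        rw [add_cast_add]
        have h1 : jj + (M - jj) = M := by omega
        rw [h1, eq_sub_iff_add_eq, add_cast_add]
        have h2 : jj - 1 + (M - jj + 1) = M := by omega
        rw [h2]
      · -- r ∈ new set
        rw [add_cast_add]
        have h1 : jj + (M - jj) = M := by omega
        rw [h1, ofs_erase hbounds (by omega), ofs_insert,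
          mem_ofs' ?_ (by omega)]
        · apply Finset.mem_insert_of_mem
          rw [Finset.erase_union_distrib]
          apply Finset.mem_union_left
          apply Finset.mem_erase.2 ⟨by omega, Finset.mem_range.2 (by omega)⟩
        · intro a ha
          rcases Finset.mem_insert.1 ha with h | h
          · omega
          · exact hbounds a (Finset.mem_of_mem_erase h)
      · -- middle sites empty
        intro jjj hj1 hj2
        rw [add_cast_add]
        have h1 : jj + (M - jj) = M := by omega
        rw [h1, ofs_erase hbounds (by omega), ofs_insert]
        have hcast : ρ + (M : ZMod L) - (jjj : ZMod L) = ρ + ((M - jjj : ℕ) : ZMod L) := by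
          rw [sub_eq_iff_eq_add, add_cast_add]
          have h2 : M - jjj + jjj = M := by omega
          rw [h2]
        rw [hcast, mem_ofs' ?_ (Nat.lt_of_le_of_lt (Nat.sub_le M jjj) hML)]
        · intro hc
          rcases Finset.mem_insert.1 hc with h | h
          · omega
          · obtain ⟨hne, hmem⟩ := Finset.mem_erase.1 h
            rcases Finset.mem_union.1 hmem with h' | h'
            · rw [Finset.mem_range] at h'; omega
            · have := hMQ _ h'; omega
        · intro a ha
          rcases Finset.mem_insert.1 ha with h | h
          · omega
          · exact hbounds a (Finset.mem_of_mem_erase h)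
      · -- assemble: rewrite the state after the march, then recurse
        rw [add_cast_add] at hmarch
        have h1 : jj + (M - jj) = M := by omega
        rw [h1, ofs_erase hbounds (by omega), ofs_insert] at hmarch
        have hsetid : insert M ((Finset.range (jj+1) ∪ Q).erase jj) =
            Finset.range jj ∪ insert M Q := by
          rw [Finset.erase_union_distrib]
          have h2 : (Finset.range (jj+1)).erase jj = Finset.range jj := by
            rw [Finset.range_add_one, Finset.erase_insert (by simp)]
          have h3 : Q.erase jj = Q := by
            apply Finset.erase_eq_of_notMem
            intro hc
            have := hMQ _ hc; omega
          rw [h2, h3, Finset.union_insert]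
        rw [hsetid] at hmarch
        -- recursive call
        have hrec := ih (insert M Q) (R.erase M) ρ
          (by rw [Finset.card_erase_of_mem hMR, hcard]; omega)
          (fun v hv => hRb v (Finset.mem_of_mem_erase hv))
          (by intro u hu
              rcases Finset.mem_insert.1 hu with h | h
              · omega
              · exact hQb u h)
          (by intro v hv u hu
              have hvR := Finset.mem_of_mem_erase hv
              have hvM : v ≠ M := (Finset.mem_erase.1 hv).1
              have hvle := hMdef ▸ R.le_max' v hvR
              rcases Finset.mem_insert.1 hu with h | h
              · omega
              · exact lt_trans (by omega) (hRQ M hMR u h))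
          (by rw [Finset.card_insert_of_notMem (fun hc => by have := hMQ _ hc; omega)]
              omega)
          m' hm'
          (by intro v hv
              apply Finset.mem_erase.2
              exact ⟨by omega, hm1 v hv⟩)
          (fun hc => hm2 (Finset.mem_of_mem_erase hc))
        obtain ⟨n, hn, hnb⟩ := hrec
        have hfinal : R.erase M ∪ insert M Q = R ∪ Q := by
          ext a
          simp only [Finset.mem_union, Finset.mem_erase, Finset.mem_insert]
          constructor
          · rintro (⟨_, h⟩ | h | h)
            · exact Or.inl h
            · exact Or.inl (h ▸ hMR)
            · exact Or.inr h
          · rintro (h | h)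
            · by_cases hc : a = M
              · exact Or.inr (Or.inl hc)
              · exact Or.inl ⟨hc, h⟩
            · exact Or.inr (Or.inr h)
        rw [hfinal] at hn
        refine ⟨(M - jj) + n, reaches_trans hmarch hn, ?_⟩
        have : (jj + 1) * (L - K) = (L - K) + jj * (L - K) := by ring
        omega

end Deal

section DealMin

variable {L : ℕ} [NeZero L]

/-- Dealing from a packed block when no target sits at the block rear:
all particles march out, the last move is a plain forward move, and the
pointer ends on the lowest target `w`. -/
lemma deal_min (K : ℕ) :
    ∀ j (Q R : Finset ℕ) (ρ : ZMod L),
    R.card = j → (∀ v ∈ R, v < L) → (∀ u ∈ Q, u < L) →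
    (∀ v ∈ R, ∀ u ∈ Q, v < u) → j + Q.card = K →
    ∀ w, 1 ≤ w → w ∈ R → (∀ v ∈ R, w ≤ v) →
    ∃ n, Reaches LStep (ofs ρ (Finset.range j ∪ Q), ρ + ((j-1 : ℕ) : ZMod L))
        (ofs ρ (R ∪ Q), ρ + (w : ZMod L)) n ∧ n ≤ j * (L - K) := by
  intro j
  induction j with
  | zero =>
    intro Q R ρ hcard _ _ _ _ w _ hw _
    rw [Finset.card_eq_zero] at hcard
    simp [hcard] at hw
  | succ jj ih =>
    intro Q R ρ hcard hRb hQb hRQ hK w hw1 hwR hlb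
    simp only [Nat.add_sub_cancel]
    have hRne : R.Nonempty := Finset.card_pos.1 (by omega)
    set M := R.max' hRne with hMdef
    clear_value M
    have hMR : M ∈ R := hMdef ▸ R.max'_mem hRne
    have hML : M < L := hRb M hMR
    have h0R : (0:ℕ) ∉ R := fun hc => by have := hlb 0 hc; omega
    have hMj : jj + 1 ≤ M := by
      by_contra hc
      have hsub : R ⊆ Finset.range (jj+1) := by
        intro v hv
        have h' := R.le_max' v hv
        rw [← hMdef] at h'
        rw [Finset.mem_range]; omega
      have heq := Finset.eq_of_subset_of_card_le hsub
        (by rw [hcard, Finset.card_range])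
      rw [heq] at h0R
      exact h0R (Finset.mem_range.2 (by omega))
    have hMQ : ∀ u ∈ Q, M < u := fun u hu => hRQ M hMR u hu
    have hd : M - jj ≤ L - K := by
      have := Qcard_bound (L := L) hQb hMQ
      omega
    have hbounds : ∀ a ∈ Finset.range (jj+1) ∪ Q, a < L := by
      intro a ha
      rcases Finset.mem_union.1 ha with h | h
      · rw [Finset.mem_range] at h; omega
      · exact hQb a h
    have hpath : ∀ i, 0 < i → i ≤ M - jj →
        ρ + ((jj : ℕ) : ZMod L) + (i : ZMod L) ∉ ofs ρ (Finset.range (jj+1) ∪ Q) := by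
      intro i hi1 hi2
      rw [add_cast_add, mem_ofs' hbounds (by omega)]
      intro hc
      rcases Finset.mem_union.1 hc with h | h
      · rw [Finset.mem_range] at h; omega
      · have := hMQ _ h; omega
    rcases Nat.eq_zero_or_pos jj with hjj0 | hjj1
    · -- j = 1 : final march ends with a forward move, pointer lands on w = M
      subst hjj0
      have hwM : w = M := by
        rw [Finset.card_eq_one] at hcard
        obtain ⟨a, ha⟩ := hcard
        rw [ha, Finset.mem_singleton] at hwR hMR
        omega
      have hmarch := march (s := ofs ρ (Finset.range 1 ∪ Q)) (p := ρ + ((0 : ℕ) : ZMod L))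
        M hML
        (by rw [mem_ofs' hbounds (by omega)]
            exact Finset.mem_union_left _ (Finset.mem_range.2 (by omega)))
        (by intro i hi1 hi2
            have := hpath i hi1 (by omega)
            simpa using this)
      rw [add_cast_add] at hmarch
      have h0M : 0 + M = M := by omega
      rw [h0M, ofs_erase hbounds (by omega), ofs_insert] at hmarch
      have hsetid : insert M ((Finset.range 1 ∪ Q).erase 0) = R ∪ Q := by
        rw [Finset.erase_union_distrib]
        have h2 : (Finset.range 1).erase 0 = (∅ : Finset ℕ) := by decide
        have h3 : Q.erase 0 = Q := by
          apply Finset.erase_eq_of_notMem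
          intro hc
          have := hMQ _ hc; omega
        have h4 : R = {M} := by
          rw [Finset.card_eq_one] at hcard
          obtain ⟨a, ha⟩ := hcard
          have : M ∈ ({a} : Finset ℕ) := ha ▸ hMR
          rw [Finset.mem_singleton] at this
          rw [ha, this]
        rw [h2, h3, h4]
        rw [Finset.empty_union, Finset.insert_eq]
      rw [hsetid] at hmarch
      rw [hwM]
      exact ⟨M, hmarch, by omega⟩
    · -- j ≥ 2 : march with final pullback, then recurse
      have hmarch := march_mpb (s := ofs ρ (Finset.range (jj+1) ∪ Q))
        (p := ρ + ((jj : ℕ) : ZMod L)) (r := ρ + ((jj - 1 : ℕ) : ZMod L))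
        (M - jj) (M - jj + 1) (by omega) (by omega)
        (by rw [mem_ofs' hbounds (by omega)]
            exact Finset.mem_union_left _ (Finset.mem_range.2 (by omega)))
        hpath (by omega) ?_ ?_ ?_
      rotate_left
      · rw [add_cast_add]
        have h1 : jj + (M - jj) = M := by omega
        rw [h1, eq_sub_iff_add_eq, add_cast_add]
        have h2 : jj - 1 + (M - jj + 1) = M := by omega
        rw [h2]
      · rw [add_cast_add]
        have h1 : jj + (M - jj) = M := by omega
        rw [h1, ofs_erase hbounds (by omega), ofs_insert,
          mem_ofs' ?_ (by omega)]
        · apply Finset.mem_insert_of_mem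
          rw [Finset.erase_union_distrib]
          apply Finset.mem_union_left
          exact Finset.mem_erase.2 ⟨by omega, Finset.mem_range.2 (by omega)⟩
        · intro a ha
          rcases Finset.mem_insert.1 ha with h | h
          · omega
          · exact hbounds a (Finset.mem_of_mem_erase h)
      · intro jjj hj1 hj2
        rw [add_cast_add]
        have h1 : jj + (M - jj) = M := by omega
        rw [h1, ofs_erase hbounds (by omega), ofs_insert]
        have hcast : ρ + (M : ZMod L) - (jjj : ZMod L) = ρ + ((M - jjj : ℕ) : ZMod L) := by
          rw [sub_eq_iff_eq_add, add_cast_add]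
          have h2 : M - jjj + jjj = M := by omega
          rw [h2]
        rw [hcast, mem_ofs' ?_ (Nat.lt_of_le_of_lt (Nat.sub_le M jjj) hML)]
        · intro hc
          rcases Finset.mem_insert.1 hc with h | h
          · omega
          · obtain ⟨hne, hmem⟩ := Finset.mem_erase.1 h
            rcases Finset.mem_union.1 hmem with h' | h'
            · rw [Finset.mem_range] at h'; omega
            · have := hMQ _ h'; omega
        · intro a ha
          rcases Finset.mem_insert.1 ha with h | h
          · omega
          · exact hbounds a (Finset.mem_of_mem_erase h)
      · rw [add_cast_add] at hmarch
        have h1 : jj + (M - jj) = M := by omega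
        rw [h1, ofs_erase hbounds (by omega), ofs_insert] at hmarch
        have hsetid : insert M ((Finset.range (jj+1) ∪ Q).erase jj) =
            Finset.range jj ∪ insert M Q := by
          rw [Finset.erase_union_distrib]
          have h2 : (Finset.range (jj+1)).erase jj = Finset.range jj := by
            rw [Finset.range_add_one, Finset.erase_insert (by simp)]
          have h3 : Q.erase jj = Q := by
            apply Finset.erase_eq_of_notMem
            intro hc
            have := hMQ _ hc; omega
          rw [h2, h3, Finset.union_insert]
        rw [hsetid] at hmarch
        have hwM : w < M := by
          obtain ⟨v, hv, hvne⟩ := Finset.exists_mem_ne (s := R) (by omega) M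
          have h' := R.le_max' v hv
          rw [← hMdef] at h'
          have := hlb v hv
          omega
        have hrec := ih (insert M Q) (R.erase M) ρ
          (by rw [Finset.card_erase_of_mem hMR, hcard]; omega)
          (fun v hv => hRb v (Finset.mem_of_mem_erase hv))
          (by intro u hu
              rcases Finset.mem_insert.1 hu with h | h
              · omega
              · exact hQb u h)
          (by intro v hv u hu
              have hvR := Finset.mem_of_mem_erase hv
              have hvM : v ≠ M := (Finset.mem_erase.1 hv).1
              have hvle := hMdef ▸ R.le_max' v hvR
              rcases Finset.mem_insert.1 hu with h | h
              · omega
              · exact lt_trans (by omega) (hRQ M hMR u h))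
          (by rw [Finset.card_insert_of_notMem (fun hc => by have := hMQ _ hc; omega)]
              omega)
          w hw1 (Finset.mem_erase.2 ⟨by omega, hwR⟩)
          (fun v hv => hlb v (Finset.mem_of_mem_erase hv))
        obtain ⟨n, hn, hnb⟩ := hrec
        have hfinal : R.erase M ∪ insert M Q = R ∪ Q := by
          ext a
          simp only [Finset.mem_union, Finset.mem_erase, Finset.mem_insert]
          constructor
          · rintro (⟨_, h⟩ | h | h)
            · exact Or.inl h
            · exact Or.inl (h ▸ hMR)
            · exact Or.inr h
          · rintro (h | h)
            · by_cases hc : a = M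
              · exact Or.inr (Or.inl hc)
              · exact Or.inl ⟨hc, h⟩
            · exact Or.inr (Or.inr h)
        rw [hfinal] at hn
        refine ⟨(M - jj) + n, reaches_trans hmarch hn, ?_⟩
        have : (jj + 1) * (L - K) = (L - K) + jj * (L - K) := by ring
        omega

end DealMin

section Outer

variable {L : ℕ} [NeZero L]

lemma sub_cast_add (q : ZMod L) {a b : ℕ} (h : b ≤ a) :
    q - (a : ZMod L) + (b : ZMod L) = q - ((a - b : ℕ) : ZMod L) := by
  rw [Nat.cast_sub h]; ring

lemma ofs_image_val (ρ : ZMod L) (t : Finset (ZMod L)) :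
    ofs ρ (t.image (fun z => (z - ρ).val)) = t := by
  ext z
  rw [mem_ofs]
  constructor
  · rintro ⟨a, ha, rfl⟩
    obtain ⟨z', hz', rfl⟩ := Finset.mem_image.1 ha
    rwa [cast_val_eq, add_sub_cancel]
  · intro hz
    exact ⟨(z - ρ).val, Finset.mem_image.2 ⟨z, hz, rfl⟩, by rw [cast_val_eq, add_sub_cancel]⟩

lemma card_image_val (ρ : ZMod L) (t : Finset (ZMod L)) :
    (t.image (fun z => (z - ρ).val)).card = t.card := by
  apply Finset.card_image_of_injOn
  intro a ha b hb h
  have h' : (a - ρ).val = (b - ρ).val := h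
  have h1 : ρ + ((a - ρ).val : ZMod L) = ρ + ((b - ρ).val : ZMod L) := by rw [h']
  rw [cast_val_eq, cast_val_eq, add_sub_cancel, add_sub_cancel] at h1
  exact h1

lemma exists_out {t : Finset (ZMod L)} {q : ZMod L} (hq : q ∈ t) (hcard : t.card < L) :
    ∃ j : ℕ, j ≤ L - 2 ∧ q - ((j + 1 : ℕ) : ZMod L) ∉ t := by
  have hne : ∃ z, z ∉ t := by
    by_contra hc
    push_neg at hc
    have : t = Finset.univ := Finset.eq_univ_iff_forall.2 hc
    rw [this, Finset.card_univ, ZMod.card] at hcard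
    omega
  obtain ⟨z, hz⟩ := hne
  have hzq : z ≠ q := fun h => hz (h ▸ hq)
  have hv : 1 ≤ (q - z).val := by
    by_contra hc
    have h0 : (q - z).val = 0 := by omega
    have : q - z = 0 := by
      have := cast_val_eq (q - z)
      rw [h0] at this
      simpa using this.symm
    rw [sub_eq_zero] at this
    exact hzq this.symm
  refine ⟨(q - z).val - 1, ?_, ?_⟩
  · have := ZMod.val_lt (q - z); omega
  · have h1 : ((q - z).val - 1 + 1 : ℕ) = (q - z).val := by omega
    rw [h1, cast_val_eq]
    simpa using hz

open Classical in
/-- `jst t q` : the length of the packed run of `t` ending at `q` going backwards. -/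
noncomputable def jst (t : Finset (ZMod L)) (q : ZMod L) : ℕ :=
  if h : ∃ j : ℕ, q - ((j + 1 : ℕ) : ZMod L) ∉ t then Nat.find h else 0

/-- `rt t q` : the rear of the packed run of `t` ending at `q`. -/
noncomputable def rt (t : Finset (ZMod L)) (q : ZMod L) : ZMod L :=
  q - ((jst t q : ℕ) : ZMod L)

lemma jst_spec {t : Finset (ZMod L)} {q : ZMod L} (hq : q ∈ t) (hcard : t.card < L) :
    (∀ i ≤ jst t q, q - (i : ZMod L) ∈ t) ∧ q - ((jst t q + 1 : ℕ) : ZMod L) ∉ t ∧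
      jst t q ≤ L - 2 := by
  obtain ⟨j₀, hj₀L, hj₀⟩ := exists_out hq hcard
  have hex : ∃ j : ℕ, q - ((j + 1 : ℕ) : ZMod L) ∉ t := ⟨j₀, hj₀⟩
  rw [jst]
  rw [dif_pos hex]
  refine ⟨?_, Nat.find_spec hex, le_trans (Nat.find_le hj₀) hj₀L⟩
  intro i hi
  rcases Nat.eq_zero_or_pos i with h | h
  · subst h; simpa using hq
  · have := Nat.find_min hex (m := i - 1) (by omega)
    rw [not_not] at this
    have h1 : (i - 1 + 1 : ℕ) = i := by omega
    rwa [h1] at this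

lemma run_mem {t : Finset (ZMod L)} {q : ZMod L} (hq : q ∈ t) (hcard : t.card < L)
    {i : ℕ} (hi : i ≤ jst t q) : rt t q + (i : ZMod L) ∈ t := by
  rw [rt, sub_cast_add q hi]
  exact (jst_spec hq hcard).1 _ (by omega)

lemma rt_add_jst {t : Finset (ZMod L)} (q : ZMod L) :
    rt t q + ((jst t q : ℕ) : ZMod L) = q := by
  rw [rt]; ring

lemma one_ne_zero' (hL : 2 ≤ L) : (1 : ZMod L) ≠ 0 := by
  intro hc
  have h1 : ((1 : ℕ) : ZMod L).val = 1 := ZMod.val_cast_of_lt (by omega)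
  rw [Nat.cast_one, hc, ZMod.val_zero] at h1
  omega

/-- Reaching a target whose pointer is on the run at the block rear. -/
lemma dealB {N : ℕ} (hN : 1 ≤ N) (hNL : N < L) (t : Finset (ZMod L)) (q ρ : ZMod L)
    (hq : q ∈ t) (hcard : t.card = N) (htop : q + 1 ∉ t)
    (i : ℕ) (hij : i ≤ jst t q) (hρ : ρ = rt t q + (i : ZMod L)) :
    ∃ n, Reaches LStep (ofs ρ (Finset.range N), ρ + ((N - 1 : ℕ) : ZMod L)) (t, q) n ∧
      n ≤ N * (L - N) := by
  have hcL : t.card < L := by omega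
  have hjL : jst t q ≤ L - 2 := (jst_spec hq hcL).2.2
  set J := jst t q with hJ
  set R := t.image (fun z => (z - ρ).val) with hR
  have hm' : 1 ≤ J - i + 1 := by omega
  have hmem : ∀ v, v < J - i + 1 → ρ + (v : ZMod L) ∈ t := by
    intro v hv
    rw [hρ, add_cast_add]
    exact run_mem hq hcL (by omega)
  have hm1 : ∀ v, v < J - i + 1 → v ∈ R := by
    intro v hv
    rw [hR]
    apply Finset.mem_image.2
    refine ⟨ρ + (v : ZMod L), hmem v hv, ?_⟩
    rw [add_sub_cancel_left, ZMod.val_cast_of_lt (by omega)]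
  have hq1 : ρ + ((J - i + 1 : ℕ) : ZMod L) = q + 1 := by
    rw [hρ, add_cast_add]
    have h1 : (i + (J - i + 1) : ℕ) = J + 1 := by omega
    rw [h1]
    push_cast
    rw [← add_assoc, rt_add_jst q]
  have hm2 : (J - i + 1) ∉ R := by
    intro hc
    obtain ⟨z, hz, hzv⟩ := Finset.mem_image.1 hc
    have : z = ρ + ((J - i + 1 : ℕ) : ZMod L) := by
      rw [← hzv, cast_val_eq, add_sub_cancel]
    rw [this, hq1] at hz
    exact htop hz
  have hdeal := deal_prefix (L := L) N N ∅ R ρ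
    (by rw [hR, card_image_val, hcard])
    (by intro v hv
        rw [hR] at hv
        obtain ⟨z, _, hzv⟩ := Finset.mem_image.1 hv
        rw [← hzv]
        exact ZMod.val_lt _)
    (by simp) (by simp) (by simp)
    (J - i + 1) hm' hm1 hm2
  obtain ⟨n, hn, hnb⟩ := hdeal
  rw [Finset.union_empty, Finset.union_empty, hR, ofs_image_val] at hn
  have hptr : ρ + ((J - i + 1 - 1 : ℕ) : ZMod L) = q := by
    have h1 : (J - i + 1 - 1 : ℕ) = J - i := by omega
    rw [h1, hρ, add_cast_add]
    have h2 : (i + (J - i) : ℕ) = J := by omega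
    rw [h2, rt_add_jst q]
  rw [hptr] at hn
  exact ⟨n, hn, hnb⟩

/-- The main outer recursion: from a packed block anywhere, reach any target. -/
lemma outer {N : ℕ} (hN : 1 ≤ N) (hNL : N < L) :
    ∀ m : ℕ, ∀ (t : Finset (ZMod L)) (q ρ : ZMod L), q ∈ t → t.card = N →
      ((rt t q - 1) - ρ).val = m →
      ∃ n, Reaches LStep (ofs ρ (Finset.range N), ρ + ((N - 1 : ℕ) : ZMod L)) (t, q) n ∧
        n ≤ N * (L - N) + m + jst t q + 1 := by
  intro m
  induction m using Nat.strong_induction_on with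
  | _ m IH =>
    intro t q ρ hq hcard hm
    have hL2 : 2 ≤ L := by omega
    have hcL : t.card < L := by omega
    have hjL : jst t q ≤ L - 2 := (jst_spec hq hcL).2.2
    by_cases hB : (q + 1 ∉ t) ∧ ∃ i ≤ jst t q, ρ = rt t q + (i : ZMod L)
    · obtain ⟨htop, i, hij, hρ⟩ := hB
      obtain ⟨n, hn, hnb⟩ := dealB hN hNL t q ρ hq hcard htop i hij hρ
      exact ⟨n, hn, by omega⟩
    · -- reduction to the displaced-rear target (t', q')
      clear hB
      set r := rt t q with hrdef
      set J := jst t q with hJdef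
      have hr_mem : r ∈ t := by
        have := run_mem hq hcL (show 0 ≤ J from by omega)
        simpa using this
      have hr1cast : r - 1 = q - ((J + 1 : ℕ) : ZMod L) := by
        rw [hrdef, rt, ← hJdef]
        push_cast
        ring
      have hout : r - 1 ∉ t := by
        rw [hr1cast]
        exact (jst_spec hq hcL).2.1
      have houte : r - 1 ∉ t.erase r := fun hc => hout (Finset.mem_of_mem_erase hc)
      set t' := insert (r - 1) (t.erase r) with ht'def
      set q' := r - 1 with hq'def
      have hq' : q' ∈ t' := Finset.mem_insert_self _ _
      have hcard' : t'.card = N := by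
        rw [ht'def, Finset.card_insert_of_notMem houte, Finset.card_erase_of_mem hr_mem,
          hcard]
        omega
      have hq'1 : q' + 1 = r := by rw [hq'def]; ring
      have hrne : r ∉ t' := by
        rw [ht'def]
        intro hc
        rcases Finset.mem_insert.1 hc with h | h
        · exact one_ne_zero' hL2 (sub_eq_self.1 h.symm)
        · exact (Finset.mem_erase.1 h).1 rfl
      have step1 : LStep (t', q') (t, r) := by
        have h2 : q' + 1 ∉ t' := by rwa [hq'1]
        have hs := stepMf hq' h2
        rw [hq'1] at hs
        rw [ht'def, Finset.erase_insert houte, Finset.insert_erase hr_mem] at hs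
        exact hs
      have walk : Reaches LStep (t, r) (t, q) J := by
        have hw := twalk (s := t) (p := r) J (fun i hi => run_mem hq hcL hi)
        have heq : r + ((J : ℕ) : ZMod L) = q := rt_add_jst q
        rwa [heq] at hw
      have chain : Reaches LStep (t', q') (t, q) (1 + J) :=
        reaches_trans (reaches_single step1) walk
      have hcL' : t'.card < L := by omega
      by_cases hC1 : ∃ i ≤ jst t' q', ρ = rt t' q' + (i : ZMod L)
      · obtain ⟨i, hij, hρ⟩ := hC1
        have htop' : q' + 1 ∉ t' := by rwa [hq'1]
        obtain ⟨n, hn, hnb⟩ := dealB hN hNL t' q' ρ hq' hcard' htop' i hij hρ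
        exact ⟨n + (1 + J), reaches_trans hn chain, by omega⟩
      · set J' := jst t' q' with hJ'def
        have hrt' : rt t' q' = q' - ((J' : ℕ) : ZMod L) := by
          rw [rt, ← hJ'def]
        have hρm : ρ = q' - ((m : ℕ) : ZMod L) := by
          have hc := cast_val_eq (q' - ρ)
          rw [hm] at hc
          rw [eq_sub_iff_add_eq, hc]
          ring
        have hm1 : J' + 1 ≤ m := by
          by_contra hc
          apply hC1
          refine ⟨J' - m, by omega, ?_⟩
          rw [hrt', sub_cast_add q' (show J' - m ≤ J' from by omega)]
          have h3 : (J' - (J' - m) : ℕ) = m := by omega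
          rw [h3, hρm]
        have hm' : ((rt t' q' - 1) - ρ).val = m - (J' + 1) := by
          have h4 : (rt t' q' - 1) - ρ = (q' - ρ) - ((J' + 1 : ℕ) : ZMod L) := by
            rw [hrt']
            push_cast
            ring
          rw [h4, val_sub_nat (show J' + 1 ≤ (q' - ρ).val from by rw [hm]; omega), hm]
        obtain ⟨n, hn, hnb⟩ := IH (m - (J' + 1)) (by omega) t' q' ρ hq' hcard' hm'
        rw [← hJ'def] at hnb
        exact ⟨n + (1 + J), reaches_trans hn chain, by omega⟩

end Outer

section Gather

variable {L : ℕ} [NeZero L]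

lemma val_add_nat {x : ZMod L} {k : ℕ} (h : x.val + k < L) :
    (x + (k : ZMod L)).val = x.val + k := by
  have h1 : x + (k : ZMod L) = ((x.val + k : ℕ) : ZMod L) := by
    rw [Nat.cast_add, cast_val_eq]
  rw [h1, ZMod.val_cast_of_lt h]

lemma val_ne_zero {x : ZMod L} (hx : x ≠ 0) : x.val ≠ 0 := by
  intro h
  exact hx ((ZMod.val_eq_zero x).1 h)

lemma val_neg_add {x : ZMod L} (hx : x ≠ 0) : x.val + (-x).val = L := by
  have hv := val_ne_zero hx
  have hlt := ZMod.val_lt x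
  have h1 : -x = ((L - x.val : ℕ) : ZMod L) := by
    have hL0 : ((L : ℕ) : ZMod L) = 0 := ZMod.natCast_self L
    rw [Nat.cast_sub (le_of_lt hlt), hL0, cast_val_eq]
    ring
  rw [h1, ZMod.val_cast_of_lt (by omega)]
  omega

lemma sub_self_val {p B : ZMod L} : B - ((B - p).val : ZMod L) = p := by
  rw [cast_val_eq]; ring

lemma path_card {N : ℕ} {s : Finset (ZMod L)} {p : ZMod L} {d : ℕ} (hdL : d < L)
    (hcard : s.card = N)
    (hpath : ∀ i, 0 < i → i ≤ d → p + (i : ZMod L) ∉ s) : d ≤ L - N := by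
  classical
  have hinj : Set.InjOn (fun i : ℕ => p + (i : ZMod L)) (Finset.Icc 1 d) := by
    intro a ha b hb h
    simp only [Finset.coe_Icc, Set.mem_Icc] at ha hb
    exact castInj (by omega) (by omega) (add_left_cancel h)
  have hsub : (Finset.Icc 1 d).image (fun i : ℕ => p + (i : ZMod L)) ⊆ sᶜ := by
    intro z hz
    obtain ⟨i, hi, rfl⟩ := Finset.mem_image.1 hz
    rw [Finset.mem_Icc] at hi
    rw [Finset.mem_compl]
    exact hpath i (by omega) (by omega)
  have h1 := Finset.card_le_card hsub
  rw [Finset.card_image_of_injOn hinj, Nat.card_Icc, Finset.card_compl, ZMod.card, hcard] at h1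
  omega

lemma card_block {c : ℕ} (hcL : c < L) (B : ZMod L) :
    ((Finset.range c).image (fun i : ℕ => B - (i : ZMod L))).card = c := by
  rw [Finset.card_image_of_injOn, Finset.card_range]
  intro a ha b hb h
  simp only [Finset.coe_range, Set.mem_Iio] at ha hb
  have h' : B - (a : ZMod L) = B - (b : ZMod L) := h
  have : (a : ZMod L) = b := by
    have := sub_right_injective h'
    exact this
  exact castInj (by omega) (by omega) this

lemma block_ofs {N : ℕ} (hN : 1 ≤ N) (hNL : N < L) (B : ZMod L) :
    ofs (B - ((N - 1 : ℕ) : ZMod L)) (Finset.range N) =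
      (Finset.range N).image (fun i : ℕ => B - (i : ZMod L)) := by
  ext z
  rw [mem_ofs]
  constructor
  · rintro ⟨a, ha, rfl⟩
    rw [Finset.mem_range] at ha
    apply Finset.mem_image.2
    refine ⟨N - 1 - a, Finset.mem_range.2 (by omega), ?_⟩
    rw [sub_cast_add B (show a ≤ N - 1 from by omega)]
  · intro hz
    obtain ⟨i, hi, rfl⟩ := Finset.mem_image.1 hz
    rw [Finset.mem_range] at hi
    refine ⟨N - 1 - i, Finset.mem_range.2 (by omega), ?_⟩
    rw [sub_cast_add B (show N - 1 - i ≤ N - 1 from by omega)]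
    have h1 : (N - 1 - (N - 1 - i) : ℕ) = i := by omega
    rw [h1]

lemma gather_rec {N : ℕ} (hN : 1 ≤ N) (hNL : N < L) :
    ∀ μ : ℕ, ∀ (s : Finset (ZMod L)) (p B : ZMod L) (c : ℕ),
      p ∈ s → s.card = N → 1 ≤ c →
      (∀ i : ℕ, i < c → B - (i : ZMod L) ∈ s) →
      c + 1 ≤ (B - p).val →
      (∀ i : ℕ, 0 < i → i ≤ (B - p).val - c → p + (i : ZMod L) ∉ s) →
      (p - B).val = μ →
      ∃ n, Reaches LStep (s, p)
          (ofs (B - ((N - 1 : ℕ) : ZMod L)) (Finset.range N), B) n ∧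
        n ≤ (N - c) * (L - N) := by
  intro μ
  induction μ using Nat.strong_induction_on with
  | _ μ IH =>
    intro s p B c hp hcard hc hI3 hb hI2 hμ
    have hL2 : 2 ≤ L := by omega
    set b := (B - p).val with hbdef
    have hbL : b < L := ZMod.val_lt _
    have hBp : B - p ≠ 0 := by
      intro hc'
      rw [hbdef] at hb
      rw [hc', ZMod.val_zero] at hb
      omega
    have hpB : p - B = -(B - p) := by ring
    have hμb : b + μ = L := by
      have := val_neg_add hBp
      rw [← hpB] at this
      omega
    have hμ1 : 1 ≤ μ := by omega
    have hpb : p = B - (b : ZMod L) := sub_self_val.symm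
    have hBs : B ∈ s := by
      have h0 := hI3 0 (by omega)
      simpa using h0
    -- find the predecessor of p
    have h4 : ∃ i : ℕ, p - ((i + 1 : ℕ) : ZMod L) ∈ s := by
      refine ⟨μ - 1, ?_⟩
      have h1 : (μ - 1 + 1 : ℕ) = μ := by omega
      rw [h1, ← hμ]
      rw [sub_self_val (p := B) (B := p)]
      exact hBs
    set hh := Nat.find h4 with hhdef
    have hpred : p - ((hh + 1 : ℕ) : ZMod L) ∈ s := Nat.find_spec h4
    have hmin : ∀ i : ℕ, 1 ≤ i → i ≤ hh → p - (i : ZMod L) ∉ s := by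
      intro i hi1 hi2
      have := Nat.find_min h4 (m := i - 1) (by omega)
      have h1 : (i - 1 + 1 : ℕ) = i := by omega
      rwa [h1] at this
    have hhμ : hh + 1 ≤ μ := by
      have hw : p - ((μ - 1 + 1 : ℕ) : ZMod L) ∈ s := by
        have h1 : (μ - 1 + 1 : ℕ) = μ := by omega
        rw [h1, ← hμ, sub_self_val (p := B) (B := p)]
        exact hBs
      have := Nat.find_min' h4 hw
      omega
    -- the march data
    set d := b - c with hddef
    have hd1 : 1 ≤ d := by omega
    have hdL : d < L := by omega
    have hland : p + (d : ZMod L) = B - (c : ZMod L) := by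
      rw [hpb, sub_cast_add B (show d ≤ b from by omega)]
      have h1 : (b - d : ℕ) = c := by omega
      rw [h1]
    have hpath : ∀ i, 0 < i → i ≤ d → p + (i : ZMod L) ∉ s := by
      intro i h1 h2
      exact hI2 i h1 (by omega)
    have hdLN : d ≤ L - N := path_card hdL hcard hpath
    -- c + 1 ≤ N
    have hcN : c + 1 ≤ N := by
      have hsub : insert p ((Finset.range c).image (fun i : ℕ => B - (i : ZMod L))) ⊆ s := by
        intro z hz
        rcases Finset.mem_insert.1 hz with h | h
        · exact h ▸ hp
        · obtain ⟨i, hi, rfl⟩ := Finset.mem_image.1 h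
          exact hI3 i (Finset.mem_range.1 hi)
      have hpn : p ∉ (Finset.range c).image (fun i : ℕ => B - (i : ZMod L)) := by
        intro hc'
        obtain ⟨i, hi, hieq⟩ := Finset.mem_image.1 hc'
        rw [Finset.mem_range] at hi
        rw [hpb] at hieq
        have : (i : ZMod L) = (b : ZMod L) := sub_right_injective hieq
        have := castInj (by omega) hbL this
        omega
      have h1 := Finset.card_le_card hsub
      rw [Finset.card_insert_of_notMem hpn, card_block (by omega) B, hcard] at h1
      omega
    by_cases hterm : hh + 1 = μ
    · -- terminal case: everything is already packed behind B except p
      -- characterize s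
      have hchar : ∀ z ∈ s, z = p ∨ ∃ i : ℕ, i < c ∧ z = B - (i : ZMod L) := by
        intro z hz
        set i := (B - z).val with hidef
        have hiz : z = B - (i : ZMod L) := sub_self_val.symm
        have hiL : i < L := ZMod.val_lt _
        rcases lt_or_ge i c with h | h
        · exact Or.inr ⟨i, h, hiz⟩
        · rcases Nat.lt_or_ge i b with h2 | h2
          · -- c ≤ i < b : contradicts emptiness of the march path
            exfalso
            have hzp : z = p + ((b - i : ℕ) : ZMod L) := by
              rw [hpb, sub_cast_add B (show b - i ≤ b from by omega)]
              have h1 : (b - (b - i) : ℕ) = i := by omega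
              rw [h1, hiz]
            exact hI2 (b - i) (by omega) (by omega) (hzp ▸ hz)
          · rcases Nat.eq_or_lt_of_le h2 with h3 | h3
            · left
              rw [hiz, hpb, ← h3]
            · -- b < i : z is strictly between B and p going down; contradicts hmin
              exfalso
              have hzp : z = p - ((i - b : ℕ) : ZMod L) := by
                rw [hpb, hiz]
                rw [Nat.cast_sub (show b ≤ i from by omega)]
                ring
              have hib : i - b ≤ hh := by omega
              exact hmin (i - b) (by omega) hib (hzp ▸ hz)
      have hseq : s = insert p ((Finset.range c).image (fun i : ℕ => B - (i : ZMod L))) := by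
        apply Finset.eq_of_subset_of_card_le
        · intro z hz
          rcases hchar z hz with h | ⟨i, hi, rfl⟩
          · exact h ▸ Finset.mem_insert_self _ _
          · exact Finset.mem_insert_of_mem
              (Finset.mem_image.2 ⟨i, Finset.mem_range.2 hi, rfl⟩)
        · have hpn : p ∉ (Finset.range c).image (fun i : ℕ => B - (i : ZMod L)) := by
            intro hc'
            obtain ⟨i, hi, hieq⟩ := Finset.mem_image.1 hc'
            rw [Finset.mem_range] at hi
            rw [hpb] at hieq
            have : (i : ZMod L) = (b : ZMod L) := sub_right_injective hieq
            have := castInj (by omega) hbL this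
            omega
          rw [Finset.card_insert_of_notMem hpn, card_block (by omega) B, hcard]
          -- need N ≤ c + 1 : combined with hcN gives c = N - 1; derive from μ = hh+1
          -- all of s is {p} ∪ block, so N = card s ≤ c + 1
          have h1 : s.card ≤ c + 1 := by
            have hsub2 : s ⊆ insert p ((Finset.range c).image
                (fun i : ℕ => B - (i : ZMod L))) := by
              intro z hz
              rcases hchar z hz with h | ⟨i, hi, rfl⟩
              · exact h ▸ Finset.mem_insert_self _ _
              · exact Finset.mem_insert_of_mem
                  (Finset.mem_image.2 ⟨i, Finset.mem_range.2 hi, rfl⟩)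
            have h2 := Finset.card_le_card hsub2
            calc s.card ≤ _ := h2
              _ ≤ c + 1 := by
                  refine le_trans (Finset.card_insert_le _ _) ?_
                  rw [card_block (by omega) B]
          rw [hcard] at h1
          omega
      have hceq : c = N - 1 := by
        have : s.card = c + 1 := by
          rw [hseq]
          have hpn : p ∉ (Finset.range c).image (fun i : ℕ => B - (i : ZMod L)) := by
            intro hc'
            obtain ⟨i, hi, hieq⟩ := Finset.mem_image.1 hc'
            rw [Finset.mem_range] at hi
            rw [hpb] at hieq
            have : (i : ZMod L) = (b : ZMod L) := sub_right_injective hieq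
            have := castInj (by omega) hbL this
            omega
          rw [Finset.card_insert_of_notMem hpn, card_block (by omega) B]
        rw [hcard] at this
        omega
      -- the final march with wrap-around pullback to B
      have hmarch := march_mpb (s := s) (p := p) (r := B) d (L - c) hd1 hdL hp hpath
        (by omega) ?_ ?_ ?_
      rotate_left
      · rw [hland, sub_sub, ← Nat.cast_add]
        have h1 : (c + (L - c) : ℕ) = L := by omega
        rw [h1]
        have hL0 : ((L : ℕ) : ZMod L) = 0 := ZMod.natCast_self L
        rw [hL0, sub_zero]
      · apply Finset.mem_insert_of_mem
        apply Finset.mem_erase.2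
        refine ⟨?_, ?_⟩
        · intro hc'
          rw [hc'] at hBp
          simp at hBp
        · have := hI3 0 (by omega)
          simpa using this
      · intro j hj1 hj2
        rw [hland]
        have hcast : B - (c : ZMod L) - (j : ZMod L) = B - ((c + j : ℕ) : ZMod L) := by
          rw [Nat.cast_add]; ring
        rw [hcast]
        intro hmem
        rcases Finset.mem_insert.1 hmem with h | h
        · have : ((c + j : ℕ) : ZMod L) = (c : ZMod L) := sub_right_injective h
          have := castInj (by omega) (by omega) this
          omega
        · have hzs := Finset.mem_of_mem_erase h
          have hzp := (Finset.mem_erase.1 h).1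
          rcases hchar _ hzs with h' | ⟨i, hi, h'⟩
          · exact hzp h'
          · have : ((c + j : ℕ) : ZMod L) = (i : ZMod L) := sub_right_injective h'
            have := castInj (by omega) (by omega) this
            omega
      · -- assemble terminal
        rw [hland] at hmarch
        have hfin : insert (B - (c : ZMod L)) (s.erase p) =
            ofs (B - ((N - 1 : ℕ) : ZMod L)) (Finset.range N) := by
          rw [block_ofs hN hNL B]
          have herase : s.erase p = (Finset.range c).image (fun i : ℕ => B - (i : ZMod L)) := by
            rw [hseq]
            apply Finset.erase_insert
            intro hc'
            obtain ⟨i, hi, hieq⟩ := Finset.mem_image.1 hc'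
            rw [Finset.mem_range] at hi
            rw [hpb] at hieq
            have : (i : ZMod L) = (b : ZMod L) := sub_right_injective hieq
            have := castInj (by omega) hbL this
            omega
          rw [herase, hceq]
          have hrange : Finset.range N = insert (N - 1) (Finset.range (N - 1)) := by
            have h1 : N = (N - 1) + 1 := by omega
            rw [h1, Finset.range_add_one]
            congr 1 <;> omega
          rw [hrange, Finset.image_insert]
        rw [hfin] at hmarch
        refine ⟨d, hmarch, ?_⟩
        have h1 : (N - c) = 1 := by omega
        rw [h1]
        omega
    · -- non-terminal: pull back to the predecessor and recurse
      have hhμ' : hh + 1 < μ := by omega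
      set pr := p - ((hh + 1 : ℕ) : ZMod L) with hprdef
      have hprne : pr ≠ p := by
        intro hc'
        rw [hprdef] at hc'
        have h1 : ((hh + 1 : ℕ) : ZMod L) = 0 := by
          have := sub_eq_self.1 hc'
          exact this
        have := congrArg ZMod.val h1
        rw [ZMod.val_cast_of_lt (by omega), ZMod.val_zero] at this
        omega
      have hmarch := march_mpb (s := s) (p := p) (r := pr) d (d + hh + 1) hd1 hdL hp hpath
        (by omega) ?_ ?_ ?_
      rotate_left
      · rw [hprdef]
        push_cast
        ring
      · apply Finset.mem_insert_of_mem
        exact Finset.mem_erase.2 ⟨hprne, hpred⟩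
      · intro j hj1 hj2
        intro hmem
        rcases Finset.mem_insert.1 hmem with h | h
        · -- site equals landing: impossible since j ≥ 1 (and j < L)
          have h' : ((j : ℕ) : ZMod L) = 0 := by
            have := sub_eq_self.1 h
            exact this
          have := congrArg ZMod.val h'
          rw [ZMod.val_cast_of_lt (by omega), ZMod.val_zero] at this
          omega
        · have hzs := Finset.mem_of_mem_erase h
          have hzp := (Finset.mem_erase.1 h).1
          rcases Nat.lt_or_ge j d with h2 | h2
          · -- j < d : site = p + (d - j), contradicts hI2
            have hsite : p + (d : ZMod L) - (j : ZMod L) = p + ((d - j : ℕ) : ZMod L) := by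
              rw [Nat.cast_sub (show j ≤ d from by omega)]
              ring
            rw [hsite] at hzs
            exact hI2 (d - j) (by omega) (by omega) hzs
          · rcases Nat.eq_or_lt_of_le h2 with h3 | h3
            · -- j = d : site = p, excluded by erase
              apply hzp
              rw [← h3]
              ring
            · -- j > d : site = p - (j - d), contradicts hmin
              have hsite : p + (d : ZMod L) - (j : ZMod L) = p - ((j - d : ℕ) : ZMod L) := by
                rw [Nat.cast_sub (show d ≤ j from by omega)]
                ring
              rw [hsite] at hzs
              exact hmin (j - d) (by omega) (by omega) hzs
      · -- assemble non-terminal: recurse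
        rw [hland] at hmarch
        set s1 := insert (B - (c : ZMod L)) (s.erase p) with hs1def
        have hBcs : B - (c : ZMod L) ∉ s := by
          have := hI2 d (by omega) (by omega)
          rwa [hland] at this
        have hcard1 : s1.card = N := by
          rw [hs1def, Finset.card_insert_of_notMem
            (fun hc' => hBcs (Finset.mem_of_mem_erase hc')),
            Finset.card_erase_of_mem hp, hcard]
          omega
        have hprs1 : pr ∈ s1 := by
          apply Finset.mem_insert_of_mem
          exact Finset.mem_erase.2 ⟨hprne, hpred⟩
        have hbpr : (B - pr).val = b + hh + 1 := by
          have h1 : B - pr = (B - p) + ((hh + 1 : ℕ) : ZMod L) := by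
            rw [hprdef]
            ring
          rw [h1, val_add_nat (by omega)]
          omega
        have hI3' : ∀ i : ℕ, i < c + 1 → B - (i : ZMod L) ∈ s1 := by
          intro i hi
          rcases Nat.lt_or_ge i c with h | h
          · apply Finset.mem_insert_of_mem
            apply Finset.mem_erase.2
            refine ⟨?_, hI3 i h⟩
            intro hc'
            rw [hpb] at hc'
            have : (i : ZMod L) = (b : ZMod L) := sub_right_injective hc'
            have := castInj (by omega) hbL this
            omega
          · have h1 : i = c := by omega
            rw [h1, hs1def]
            exact Finset.mem_insert_self _ _
        have hI2' : ∀ i : ℕ, 0 < i → i ≤ (B - pr).val - (c + 1) →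
            pr + (i : ZMod L) ∉ s1 := by
          intro i hi1 hi2
          rw [hbpr] at hi2
          intro hmem
          rcases Finset.mem_insert.1 hmem with h | h
          · -- pr + i = B - c = p + d, so i = hh + 1 + d : excluded since i ≤ hh + d
            rw [← hland, hprdef] at h
            have h1 : ((i : ℕ) : ZMod L) = ((hh + 1 + d : ℕ) : ZMod L) := by
              have h2 : p - ((hh+1 : ℕ) : ZMod L) + (i : ZMod L) = p + ((i : ℕ) : ZMod L) -
                  ((hh+1 : ℕ) : ZMod L) := by ring
              have h3 := h
              rw [h2] at h3
              have h4 : p + ((i : ℕ) : ZMod L) = p + (((d : ℕ) : ZMod L) +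
                  ((hh+1 : ℕ) : ZMod L)) := by
                rw [eq_add_of_sub_eq h3]
                ring
              have h5 := add_left_cancel h4
              rw [h5]
              push_cast
              ring
            have := castInj (by omega) (by omega) h1
            omega
          · have hzs := Finset.mem_of_mem_erase h
            have hzp := (Finset.mem_erase.1 h).1
            rcases Nat.lt_or_ge i (hh + 1) with h2 | h2
            · -- i ≤ hh : site = p - (hh + 1 - i), contradicts hmin
              have hsite : pr + (i : ZMod L) = p - ((hh + 1 - i : ℕ) : ZMod L) := by
                rw [hprdef, Nat.cast_sub (show i ≤ hh + 1 from by omega)]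
                ring
              rw [hsite] at hzs
              exact hmin (hh + 1 - i) (by omega) (by omega) hzs
            · rcases Nat.eq_or_lt_of_le h2 with h3 | h3
              · -- i = hh + 1 : site = p, excluded by erase
                apply hzp
                rw [hprdef, ← h3]
                ring
              · -- i > hh + 1 : site = p + (i - hh - 1), contradicts hI2
                have hsite : pr + (i : ZMod L) = p + ((i - (hh + 1) : ℕ) : ZMod L) := by
                  rw [hprdef, Nat.cast_sub (show hh + 1 ≤ i from by omega)]
                  ring
                rw [hsite] at hzs
                exact hI2 (i - (hh + 1)) (by omega) (by omega) hzs
        have hμ' : (pr - B).val = μ - (hh + 1) := by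
          have h1 : pr - B = (p - B) - ((hh + 1 : ℕ) : ZMod L) := by
            rw [hprdef]
            ring
          rw [h1, val_sub_nat (by omega : hh + 1 ≤ (p - B).val), hμ]
        obtain ⟨n, hn, hnb⟩ := IH (μ - (hh + 1)) (by omega) s1 pr B (c + 1)
          hprs1 hcard1 (by omega) hI3' (by omega) hI2' hμ'
        refine ⟨d + n, reaches_trans hmarch hn, ?_⟩
        have h1 : (N - c) * (L - N) = (L - N) + (N - (c + 1)) * (L - N) := by
          have h2 : (N - c) = 1 + (N - (c + 1)) := by omega
          rw [h2]
          ring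
        omega

end Gather

section GatherWrap

variable {L : ℕ} [NeZero L]

lemma add_self_val {p z : ZMod L} : p + ((z - p).val : ZMod L) = z := by
  rw [cast_val_eq]; ring

lemma gather {N : ℕ} (hN : 1 ≤ N) (hNL : N < L) (s : Finset (ZMod L)) (p : ZMod L)
    (hp : p ∈ s) (hcard : s.card = N) :
    ∃ (B : ZMod L) (n : ℕ), Reaches LStep (s, p)
      (ofs (B - ((N - 1 : ℕ) : ZMod L)) (Finset.range N), B) n ∧
      n ≤ N * (L - N) + L := by
  have hL2 : 2 ≤ L := by omega
  -- a hole exists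
  have hz : ∃ z, z ∉ s := by
    by_contra hc
    push_neg at hc
    have : s = Finset.univ := Finset.eq_univ_iff_forall.2 hc
    rw [this, Finset.card_univ, ZMod.card] at hcard
    omega
  obtain ⟨z, hzs⟩ := hz
  have hzp : z ≠ p := fun h => hzs (h ▸ hp)
  have hzv : 1 ≤ (z - p).val := by
    rcases Nat.eq_zero_or_pos (z - p).val with h | h
    · exfalso
      have : z - p = 0 := (ZMod.val_eq_zero _).1 h
      rw [sub_eq_zero] at this
      exact hzp this
    · exact h
  -- walk to the front of the pointer's run
  have h1 : ∃ i : ℕ, p + ((i + 1 : ℕ) : ZMod L) ∉ s := by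
    refine ⟨(z - p).val - 1, ?_⟩
    have he : ((z - p).val - 1 + 1 : ℕ) = (z - p).val := by omega
    rw [he, add_self_val]
    exact hzs
  set e := Nat.find h1 with hedef
  have he1 : p + ((e + 1 : ℕ) : ZMod L) ∉ s := Nat.find_spec h1
  have hemem : ∀ i : ℕ, i ≤ e → p + (i : ZMod L) ∈ s := by
    intro i hi
    rcases Nat.eq_zero_or_pos i with h | h
    · subst h; simpa using hp
    · have := Nat.find_min h1 (m := i - 1) (by omega)
      rw [not_not] at this
      have he : (i - 1 + 1 : ℕ) = i := by omega
      rwa [he] at this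
  have heL : e ≤ L - 2 := by
    have hw : p + (((z - p).val - 1 + 1 : ℕ) : ZMod L) ∉ s := by
      have he : ((z - p).val - 1 + 1 : ℕ) = (z - p).val := by omega
      rw [he, add_self_val]
      exact hzs
    have := Nat.find_min' h1 hw
    have := ZMod.val_lt (z - p)
    omega
  set p₀ := p + (e : ZMod L) with hp₀def
  have hp₀ : p₀ ∈ s := hemem e le_rfl
  have hp₀1 : p₀ + 1 ∉ s := by
    rw [hp₀def, add_cast_succ]
    exact he1
  have walk : Reaches LStep (s, p) (s, p₀) e := twalk e hemem
  -- find the anchor rear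
  have h2 : ∃ i : ℕ, p₀ + ((i + 2 : ℕ) : ZMod L) ∈ s := by
    refine ⟨L - 2, ?_⟩
    have he : (L - 2 + 2 : ℕ) = L := by omega
    rw [he]
    have hL0 : ((L : ℕ) : ZMod L) = 0 := ZMod.natCast_self L
    rw [hL0, add_zero]
    exact hp₀
  set g := Nat.find h2 with hgdef
  have hg : p₀ + ((g + 2 : ℕ) : ZMod L) ∈ s := Nat.find_spec h2
  have hgL : g ≤ L - 2 := by
    apply Nat.find_min' h2
    have he : (L - 2 + 2 : ℕ) = L := by omega
    rw [he]
    have hL0 : ((L : ℕ) : ZMod L) = 0 := ZMod.natCast_self L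
    rw [hL0, add_zero]
    exact hp₀
  have hgap : ∀ i : ℕ, 1 ≤ i → i ≤ g + 1 → p₀ + (i : ZMod L) ∉ s := by
    intro i hi1 hi2
    rcases Nat.eq_or_lt_of_le hi1 with h | h
    · rw [← h]
      simpa using hp₀1
    · have := Nat.find_min h2 (m := i - 2) (by omega)
      have he : (i - 2 + 2 : ℕ) = i := by omega
      rwa [he] at this
  -- find the anchor front
  set A₀ := p₀ + ((g + 2 : ℕ) : ZMod L) with hA₀def
  have h3 : ∃ j : ℕ, A₀ + ((j + 1 : ℕ) : ZMod L) ∉ s := by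
    refine ⟨L - g - 2, ?_⟩
    rw [hA₀def, add_cast_add]
    have he : (g + 2 + (L - g - 2 + 1) : ℕ) = L + 1 := by omega
    rw [he]
    have hL1 : ((L + 1 : ℕ) : ZMod L) = 1 := by
      push_cast
      rw [ZMod.natCast_self L]
      ring
    rw [hL1]
    exact hp₀1
  set a := Nat.find h3 with hadef
  have ha : A₀ + ((a + 1 : ℕ) : ZMod L) ∉ s := Nat.find_spec h3
  have haL : a ≤ L - g - 2 := by
    apply Nat.find_min' h3
    rw [hA₀def, add_cast_add]
    have he : (g + 2 + (L - g - 2 + 1) : ℕ) = L + 1 := by omega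
    rw [he]
    have hL1 : ((L + 1 : ℕ) : ZMod L) = 1 := by
      push_cast
      rw [ZMod.natCast_self L]
      ring
    rw [hL1]
    exact hp₀1
  have hamem : ∀ k : ℕ, k ≤ a → A₀ + (k : ZMod L) ∈ s := by
    intro k hk
    rcases Nat.eq_zero_or_pos k with h | h
    · subst h; simpa using hg
    · have := Nat.find_min h3 (m := k - 1) (by omega)
      rw [not_not] at this
      have he : (k - 1 + 1 : ℕ) = k := by omega
      rwa [he] at this
  set B := A₀ + (a : ZMod L) with hBdef
  have hBp₀ : B = p₀ + ((g + 2 + a : ℕ) : ZMod L) := by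
    rw [hBdef, hA₀def, add_cast_add]
  rcases Nat.eq_or_lt_of_le (show g + 2 + a ≤ L from by omega) with hone | hlt
  · -- one-hole configuration: s is already a packed block with front p₀
    have hBeq : B = p₀ := by
      rw [hBp₀, hone]
      have hL0 : ((L : ℕ) : ZMod L) = 0 := ZMod.natCast_self L
      rw [hL0, add_zero]
    -- characterize s
    have hchar : ∀ w : ZMod L, w ∈ s ↔ ∃ i : ℕ, i < a + 1 ∧ p₀ - (i : ZMod L) = w := by
      intro w
      constructor
      · intro hw
        set j := (w - p₀).val with hjdef
        have hjw : w = p₀ + (j : ZMod L) := add_self_val.symm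
        have hjL : j < L := ZMod.val_lt _
        rcases Nat.eq_zero_or_pos j with h0 | h0
        · refine ⟨0, by omega, ?_⟩
          rw [hjw, h0]
          simp
        · rcases Nat.lt_or_ge j (g + 2) with h | h
          · exfalso
            exact hgap j (by omega) (by omega) (hjw ▸ hw)
          · refine ⟨L - j, by omega, ?_⟩
            rw [hjw]
            rw [Nat.cast_sub (by omega : j ≤ L)]
            have hL0 : ((L : ℕ) : ZMod L) = 0 := ZMod.natCast_self L
            rw [hL0]
            ring
      · rintro ⟨i, hi, rfl⟩
        rcases Nat.eq_zero_or_pos i with h0 | h0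
        · subst h0; simpa using hp₀
        · have hmem := hamem (a - i) (by omega)
          have heq : A₀ + ((a - i : ℕ) : ZMod L) = p₀ - (i : ZMod L) := by
            rw [hA₀def, add_cast_add]
            have h5 : (g + 2 + (a - i) : ℕ) = L - i := by omega
            rw [h5, Nat.cast_sub (by omega : i ≤ L)]
            have hL0 : ((L : ℕ) : ZMod L) = 0 := ZMod.natCast_self L
            rw [hL0]
            ring
          rwa [heq] at hmem
    have hNa : N = a + 1 := by
      have hseq : s = (Finset.range (a + 1)).image (fun i : ℕ => p₀ - (i : ZMod L)) := by
        ext w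
        rw [Finset.mem_image, hchar w]
        constructor
        · rintro ⟨i, hi, he⟩
          exact ⟨i, Finset.mem_range.2 hi, he⟩
        · rintro ⟨i, hi, he⟩
          exact ⟨i, Finset.mem_range.1 hi, he⟩
      rw [← hcard, hseq, card_block (by omega) p₀]
    have hsofs : s = ofs (p₀ - ((N - 1 : ℕ) : ZMod L)) (Finset.range N) := by
      rw [block_ofs hN hNL p₀]
      ext w
      rw [Finset.mem_image, hchar w]
      constructor
      · rintro ⟨i, hi, he⟩
        exact ⟨i, Finset.mem_range.2 (by rw [hNa]; exact hi), he⟩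
      · rintro ⟨i, hi, he⟩
        refine ⟨i, ?_, he⟩
        rw [← hNa]
        exact Finset.mem_range.1 hi
    refine ⟨p₀, e, ?_, by omega⟩
    rw [← hsofs]
    exact walk
  · -- general case: run gather_rec from p₀ with the anchor block
    have hbval : (B - p₀).val = g + 2 + a := by
      have hsub : B - p₀ = ((g + 2 + a : ℕ) : ZMod L) := by
        rw [hBp₀]
        ring
      rw [hsub, ZMod.val_cast_of_lt hlt]
    have hI3 : ∀ i : ℕ, i < a + 1 → B - (i : ZMod L) ∈ s := by
      intro i hi
      have hmem := hamem (a - i) (by omega)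
      have heq : A₀ + ((a - i : ℕ) : ZMod L) = B - (i : ZMod L) := by
        rw [hBdef, Nat.cast_sub (by omega : i ≤ a)]
        ring
      rwa [heq] at hmem
    have hI2 : ∀ i : ℕ, 0 < i → i ≤ (B - p₀).val - (a + 1) → p₀ + (i : ZMod L) ∉ s := by
      intro i hi1 hi2
      rw [hbval] at hi2
      exact hgap i (by omega) (by omega)
    obtain ⟨n, hn, hnb⟩ := gather_rec hN hNL ((p₀ - B).val) s p₀ B (a + 1)
      hp₀ hcard (by omega) hI3 (by omega) hI2 rfl
    refine ⟨B, e + n, reaches_trans walk hn, ?_⟩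
    have hle : (N - (a + 1)) * (L - N) ≤ N * (L - N) := by
      apply Nat.mul_le_mul_right
      omega
    omega

end GatherWrap

/-- the lifted-TASEP diameter is at most
`2N(L-N) + N² + C·L = N(2L-N) + O(L)` for a constant `C` independent of `N`
and `L`. -/
theorem lifted_diameter_upper_bound :
    ∃ C : ℕ, ∀ N L : ℕ, N < L →
      ∀ x y : Finset (ZMod L) × ZMod L,
        x.1.card = N → x.2 ∈ x.1 → y.1.card = N → y.2 ∈ y.1 →
        ∃ n : ℕ, Reaches (LStep (L := L)) x y n ∧
          n ≤ 2 * N * (L - N) + N ^ 2 + C * L := by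
  refine ⟨10, ?_⟩
  intro N L hNL x y hx1 hx2 hy1 hy2
  obtain ⟨xs, xp⟩ := x
  obtain ⟨ys, yp⟩ := y
  simp only at hx1 hx2 hy1 hy2
  rcases Nat.eq_zero_or_pos N with hN0 | hN
  · exfalso
    subst hN0
    rw [Finset.card_eq_zero] at hx1
    rw [hx1] at hx2
    simp at hx2
  haveI : NeZero L := ⟨by omega⟩
  obtain ⟨B, n₁, hr1, hb1⟩ := gather hN hNL xs xp hx2 hx1
  have hptr : (B - ((N - 1 : ℕ) : ZMod L)) + ((N - 1 : ℕ) : ZMod L) = B := by ring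
  obtain ⟨n₂, hr2, hb2⟩ := outer hN hNL (((rt ys yp - 1) - (B - ((N - 1 : ℕ) : ZMod L))).val)
    ys yp (B - ((N - 1 : ℕ) : ZMod L)) hy2 hy1 rfl
  rw [hptr] at hr2
  refine ⟨n₁ + n₂, reaches_trans hr1 hr2, ?_⟩
  have hm : ((rt ys yp - 1) - (B - ((N - 1 : ℕ) : ZMod L))).val < L := ZMod.val_lt _
  have hj : jst ys yp ≤ L - 2 := (jst_spec hy2 (by omega)).2.2
  have h2 : 2 * N * (L - N) = N * (L - N) + N * (L - N) := by ring
  rw [h2]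
  have hsq : 0 ≤ N ^ 2 := by positivity
  omega

end Paper
end
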